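/- arXiv:2601.08650 — 4 statements merged into one kernel-verified Lean document; each statement's English description precedes it below -/
import Mathlib

section
/- Let α ∈ (0,1), f ∈ C¹([0,∞), ℝ), g ∈ C([0,∞), ℝ). If f − f(0) = Y_α * g on [0,∞), then Y_{1−α} * f' = g on [0,∞). -/
open MeasureTheory intervalIntegral Real Set

noncomputable def Y (ν t : ℝ) : ℝ := t ^ (ν - 1) / Real.Gamma ν

lemma realBeta {a b : ℝ} (ha : 0 < a) (hb : 0 < b) :
    ∫ x in (0:ℝ)..1, x ^ (a-1) * (1-x) ^ (b-1) = Gamma a * Gamma b / Gamma (a+b) := by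
  have key := Complex.Gamma_mul_Gamma_eq_betaIntegral (s := (a:ℂ)) (t := (b:ℂ))
    (by simpa using ha) (by simpa using hb)
  have hbeta : Complex.betaIntegral a b =
      ((∫ x in (0:ℝ)..1, x ^ (a-1) * (1-x) ^ (b-1) : ℝ) : ℂ) := by
    rw [Complex.betaIntegral, ← intervalIntegral.integral_ofReal]
    refine intervalIntegral.integral_congr fun x hx => ?_
    rw [uIcc_of_le (by norm_num)] at hx
    push_cast
    rw [Complex.ofReal_cpow hx.1, Complex.ofReal_cpow (by linarith [hx.2])]
    push_cast
    ring
  have hG : Complex.Gamma ((a:ℂ)+(b:ℂ)) ≠ 0 := by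
    rw [← Complex.ofReal_add, Complex.Gamma_ofReal]
    exact_mod_cast Real.Gamma_ne_zero
      (fun m => ne_of_gt (by have : (0:ℝ) ≤ m := Nat.cast_nonneg m; linarith))
  have : ((Gamma a * Gamma b / Gamma (a+b) : ℝ) : ℂ) =
      ((∫ x in (0:ℝ)..1, x ^ (a-1) * (1-x) ^ (b-1) : ℝ) : ℂ) := by
    rw [← hbeta]
    push_cast
    rw [← Complex.Gamma_ofReal, ← Complex.Gamma_ofReal, ← Complex.Gamma_ofReal]
    push_cast
    field_simp at key ⊢
    rw [key]
  exact_mod_cast this.symm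



lemma Yconv {a b : ℝ} (ha : 0 < a) (hb : 0 < b) {v t : ℝ} (hvt : v < t) :
    ∫ u in v..t, Y a (t-u) * Y b (u-v) = Y (a+b) (t-v) := by
  set c := t - v with hcdef
  have hc : 0 < c := by simp [hcdef]; linarith
  have sub := intervalIntegral.integral_comp_mul_add
    (f := fun u => Y a (t-u) * Y b (u-v)) (a:=0) (b:=1) hc.ne' v
  simp only [mul_zero, zero_add, mul_one] at sub
  have hcv : c + v = t := by simp [hcdef]
  rw [hcv] at sub
  have congr1 : ∫ x in (0:ℝ)..1, Y a (t - (c*x + v)) * Y b (c*x + v - v)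
      = ∫ x in (0:ℝ)..1, (c^(a-1) * c^(b-1) / (Gamma a * Gamma b)) * (x^(b-1) * (1-x)^(a-1)) := by
    refine intervalIntegral.integral_congr fun x hx => ?_
    rw [uIcc_of_le (by norm_num)] at hx
    have hx0 : 0 ≤ x := hx.1
    have hx1 : 0 ≤ 1 - x := by linarith [hx.2]
    have e1 : t - (c*x + v) = c * (1-x) := by rw [hcdef]; ring
    have e2 : c*x + v - v = c * x := by ring
    rw [e1, e2, Y, Y, Real.mul_rpow hc.le hx1, Real.mul_rpow hc.le hx0]
    field_simp
  rw [congr1, intervalIntegral.integral_const_mul, realBeta hb ha] at sub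
  have hI : ∫ u in v..t, Y a (t-u) * Y b (u-v)
      = c • (c ^ (a-1) * c ^ (b-1) / (Gamma a * Gamma b) * (Gamma b * Gamma a / Gamma (b+a))) := by
    rw [sub, smul_inv_smul₀ hc.ne']
  rw [hI, Y, smul_eq_mul, add_comm b a]
  have hGa := Real.Gamma_pos_of_pos ha
  have hGb := Real.Gamma_pos_of_pos hb
  have hGab := Real.Gamma_pos_of_pos (by linarith : 0 < a + b)
  have hpow : c ^ (a+b-1) = c * (c^(a-1) * c^(b-1)) := by
    rw [show a+b-1 = 1+((a-1)+(b-1)) by ring, Real.rpow_add hc, Real.rpow_add hc, Real.rpow_one]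
  rw [hpow]
  field_simp



lemma Y_meas (b : ℝ) : Measurable (Y b) := by
  unfold Y; measurability

lemma Y_nonneg {b : ℝ} (hb : 0 < b) {s : ℝ} (hs : 0 ≤ s) : 0 ≤ Y b s :=
  div_nonneg (Real.rpow_nonneg hs _) (Real.Gamma_pos_of_pos hb).le

lemma Y_ii {b : ℝ} (hb : 0 < b) (p q : ℝ) : IntervalIntegrable (Y b) volume p q := by
  have := intervalIntegral.intervalIntegrable_rpow' (a := p) (b := q) (r := b - 1)
    (by linarith)
  have e : Y b = fun x => x ^ (b - 1) * (Real.Gamma b)⁻¹ := by ext x; simp [Y, div_eq_mul_inv]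
  rw [e]; exact this.mul_const _

lemma Y_ii_sub {b : ℝ} (hb : 0 < b) (u : ℝ) :
    IntervalIntegrable (fun v => Y b (u - v)) volume 0 u := by
  simpa using ((Y_ii hb 0 u).comp_sub_left u).symm

lemma Y_integral {b : ℝ} (hb : 0 < b) {u : ℝ} (hu : 0 ≤ u) :
    ∫ s in (0:ℝ)..u, Y b s = u ^ b / Real.Gamma (b+1) := by
  simp only [Y, div_eq_mul_inv]
  rw [intervalIntegral.integral_mul_const, integral_rpow (Or.inl (by linarith))]
  rw [Real.zero_rpow (by linarith : b - 1 + 1 ≠ 0)]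
  rw [Real.Gamma_add_one hb.ne']
  have : b - 1 + 1 = b := by ring
  rw [this, mul_inv, sub_zero]
  field_simp

lemma Y_integral_sub {b : ℝ} (hb : 0 < b) {u : ℝ} (hu : 0 ≤ u) :
    ∫ v in (0:ℝ)..u, Y b (u - v) = u ^ b / Real.Gamma (b+1) := by
  rw [intervalIntegral.integral_comp_sub_left (Y b) u]
  simpa using Y_integral hb hu

lemma fub {a b : ℝ} (ha : 0 < a) (hb : 0 < b) (φ : ℝ → ℝ) (hφ : Continuous φ)
    {t : ℝ} (ht : 0 < t) :
    ∫ u in (0:ℝ)..t, ∫ v in (0:ℝ)..u, Y a (t-u) * (Y b (u-v) * φ v)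
      = ∫ v in (0:ℝ)..t, Y (a+b) (t-v) * φ v := by
  set μ := volume.restrict (Ioc (0:ℝ) t) with hμ
  set G : ℝ → ℝ → ℝ := fun u v => Y a (t-u) * (Y b (u-v) * φ v) with hG
  set F : ℝ → ℝ → ℝ := fun u v => (Ioc (0:ℝ) u).indicator (G u) v with hF
  obtain ⟨M, hM⟩ := isCompact_Icc.exists_bound_of_continuousOn
    (s := Icc (0:ℝ) t) hφ.continuousOn
  have hM0 : 0 ≤ M := le_trans (norm_nonneg (φ 0)) (hM 0 (by constructor <;> [rfl; exact ht.le]))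
  -- slice integrability
  have S1 : ∀ u : ℝ, 0 ≤ u → IntegrableOn (fun v => Y b (u-v) * φ v) (Ioc 0 u) volume := by
    intro u hu
    have II := (Y_ii_sub hb u).mul_continuousOn hφ.continuousOn
    exact (intervalIntegrable_iff_integrableOn_Ioc_of_le hu).mp II
  -- measurability
  have hGm : AEStronglyMeasurable (fun p : ℝ×ℝ => G p.1 p.2) (μ.prod μ) :=
    (((Y_meas a).comp (measurable_const.sub measurable_fst)).mul
      (((Y_meas b).comp (measurable_fst.sub measurable_snd)).mul
        (hφ.measurable.comp measurable_snd))).aestronglyMeasurable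
  have hSm : MeasurableSet {p : ℝ×ℝ | 0 < p.2 ∧ p.2 ≤ p.1} :=
    (measurableSet_lt measurable_const measurable_snd).inter
      (measurableSet_le measurable_snd measurable_fst)
  have hFeq : Function.uncurry F
      = {p : ℝ×ℝ | 0 < p.2 ∧ p.2 ≤ p.1}.indicator (fun p => G p.1 p.2) := by
    ext p
    simp only [Function.uncurry, hF, Set.indicator_apply, Set.mem_Ioc, Set.mem_setOf_eq]
  have hFm : AEStronglyMeasurable (Function.uncurry F) (μ.prod μ) := by
    rw [hFeq]; exact hGm.indicator hSm
  -- integrability on the product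
  have S3 : Integrable (Function.uncurry F) (μ.prod μ) := by
    rw [MeasureTheory.integrable_prod_iff hFm]
    constructor
    · filter_upwards [ae_restrict_mem measurableSet_Ioc] with u hu
      have h1 : IntegrableOn (G u) (Ioc 0 u) volume := by
        exact ((S1 u hu.1.le).const_mul _)
      exact (h1.integrable_indicator measurableSet_Ioc).restrict
    · refine Integrable.mono' (g := fun u => Y a (t-u) * (M * (t^b / Real.Gamma (b+1)))) ?_ ?_ ?_
      · have II := ((Y_ii_sub ha t).mul_const (M * (t^b / Real.Gamma (b+1))))
        exact (intervalIntegrable_iff_integrableOn_Ioc_of_le ht.le).mp II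
      · exact hFm.norm.integral_prod_right'
      · filter_upwards [ae_restrict_mem measurableSet_Ioc] with u hu
        have h0u : 0 < u := hu.1
        have hut : u ≤ t := hu.2
        have htu : 0 ≤ t - u := by linarith
        have e1 : (fun v => ‖F u v‖) = (Ioc (0:ℝ) u).indicator (fun v => ‖G u v‖) := by
          ext v; rw [hF]; exact norm_indicator_eq_indicator_norm _ _
        have e2 : ∫ v, ‖F u v‖ ∂μ = ∫ v in Ioc 0 u, ‖G u v‖ := by
          rw [e1, hμ, MeasureTheory.integral_indicator measurableSet_Ioc,
            Measure.restrict_restrict measurableSet_Ioc, Set.Ioc_inter_Ioc]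
          simp [min_eq_left hut]
        have key : ∫ v in Ioc 0 u, ‖G u v‖ ≤ Y a (t-u) * (M * (u^b / Real.Gamma (b+1))) := by
          have hint1 : IntegrableOn (fun v => ‖G u v‖) (Ioc 0 u) volume :=
            ((S1 u h0u.le).const_mul _).norm
          have hint2 : IntegrableOn (fun v => Y a (t-u) * (M * Y b (u-v))) (Ioc 0 u) volume := by
            have := ((Y_ii_sub hb u).const_mul M).const_mul (Y a (t-u))
            exact (intervalIntegrable_iff_integrableOn_Ioc_of_le h0u.le).mp this
          have hle : ∀ v ∈ Ioc (0:ℝ) u, ‖G u v‖ ≤ Y a (t-u) * (M * Y b (u-v)) := by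
            intro v hv
            have hv0 : 0 ≤ v := hv.1.le
            have hvu : 0 ≤ u - v := by linarith [hv.2]
            rw [hG]
            simp only [norm_mul, Real.norm_eq_abs,
              abs_of_nonneg (Y_nonneg ha htu), abs_of_nonneg (Y_nonneg hb hvu)]
            have hφv : |φ v| ≤ M := hM v ⟨hv0, le_trans hv.2 hut⟩
            have := mul_le_mul_of_nonneg_left hφv (Y_nonneg hb hvu)
            have := mul_le_mul_of_nonneg_left this (Y_nonneg ha htu)
            calc Y a (t-u) * (Y b (u-v) * |φ v|) ≤ Y a (t-u) * (Y b (u-v) * M) := this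
              _ = Y a (t-u) * (M * Y b (u-v)) := by ring
          have := MeasureTheory.setIntegral_mono_on hint1 hint2 measurableSet_Ioc hle
          refine le_trans this ?_
          rw [MeasureTheory.integral_const_mul, MeasureTheory.integral_const_mul]
          rw [← intervalIntegral.integral_of_le h0u.le, Y_integral_sub hb h0u.le]
        have hub : u ^ b ≤ t ^ b := Real.rpow_le_rpow h0u.le hut hb.le
        have hΓ : 0 < Real.Gamma (b+1) := Real.Gamma_pos_of_pos (by linarith)
        have hnn : 0 ≤ ∫ v, ‖F u v‖ ∂μ := integral_nonneg (fun v => norm_nonneg _)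
        show |∫ v, ‖F u v‖ ∂μ| ≤ Y a (t-u) * (M * (t ^ b / Real.Gamma (b+1)))
        rw [abs_of_nonneg hnn, e2]
        refine le_trans key ?_
        have h1 : u ^ b / Real.Gamma (b+1) ≤ t ^ b / Real.Gamma (b+1) :=
          (div_le_div_iff_of_pos_right hΓ).mpr hub
        exact mul_le_mul_of_nonneg_left
          (mul_le_mul_of_nonneg_left h1 hM0) (Y_nonneg ha htu)
  -- step 4 : rewrite LHS as double integral over μ
  have inner_eq : ∀ u ∈ Ioc (0:ℝ) t, ∫ v, F u v ∂μ = ∫ v in Ioc 0 u, G u v := by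
    intro u hu
    rw [hμ]
    show ∫ v, (Ioc (0:ℝ) u).indicator (G u) v ∂(volume.restrict (Ioc 0 t)) = _
    rw [MeasureTheory.integral_indicator measurableSet_Ioc,
      Measure.restrict_restrict measurableSet_Ioc, Set.Ioc_inter_Ioc]
    simp [min_eq_left hu.2]
  have S4 : ∫ u in (0:ℝ)..t, ∫ v in (0:ℝ)..u, Y a (t-u) * (Y b (u-v) * φ v)
      = ∫ u, (∫ v, F u v ∂μ) ∂μ := by
    rw [intervalIntegral.integral_of_le ht.le]
    refine MeasureTheory.setIntegral_congr_fun measurableSet_Ioc (fun u hu => ?_)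
    rw [inner_eq u hu, intervalIntegral.integral_of_le hu.1.le]
  -- step 5 : swap
  have S5 : ∫ u, (∫ v, F u v ∂μ) ∂μ = ∫ v, (∫ u, F u v ∂μ) ∂μ :=
    MeasureTheory.integral_integral_swap S3
  -- step 6 : compute inner integral for a.e. v
  have hne : ∀ᵐ v ∂μ, v ≠ t := by
    refine ae_restrict_of_ae ?_
    refine ae_iff.mpr ?_
    have : {v : ℝ | ¬ v ≠ t} = {t} := by ext v; simp [not_not]
    rw [this]
    exact measure_singleton t
  have S6 : ∫ v, (∫ u, F u v ∂μ) ∂μ = ∫ v, Y (a+b) (t-v) * φ v ∂μ := by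
    refine MeasureTheory.integral_congr_ae ?_
    filter_upwards [ae_restrict_mem measurableSet_Ioc, hne] with v hv hvt
    have hv0 : 0 < v := hv.1
    have hvlt : v < t := lt_of_le_of_ne hv.2 hvt
    have e3 : (fun u => F u v) = (Ici v).indicator (fun u => G u v) := by
      ext u
      by_cases h : v ≤ u
      · simp [hF, Set.indicator_apply, Set.mem_Ioc, Set.mem_Ici, h, hv0]
      · simp [hF, Set.indicator_apply, Set.mem_Ioc, Set.mem_Ici, h]
    have e4 : Ici v ∩ Ioc 0 t = Icc v t := by
      ext u
      simp only [Set.mem_inter_iff, Set.mem_Ici, Set.mem_Ioc, Set.mem_Icc]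
      constructor
      · rintro ⟨h1, _, h3⟩; exact ⟨h1, h3⟩
      · rintro ⟨h1, h2⟩; exact ⟨h1, lt_of_lt_of_le hv0 h1, h2⟩
    rw [e3, hμ, MeasureTheory.integral_indicator measurableSet_Ici,
      Measure.restrict_restrict measurableSet_Ici, e4,
      MeasureTheory.integral_Icc_eq_integral_Ioc,
      ← intervalIntegral.integral_of_le hvlt.le]
    have e5 : ∫ u in v..t, G u v = (∫ u in v..t, Y a (t-u) * Y b (u-v)) * φ v := by
      rw [← intervalIntegral.integral_mul_const]
      refine intervalIntegral.integral_congr fun u _ => ?_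
      show Y a (t-u) * (Y b (u-v) * φ v) = Y a (t-u) * Y b (u-v) * φ v
      ring
    rw [e5, Yconv ha hb hvlt]
  rw [S4, S5, S6, hμ, ← intervalIntegral.integral_of_le ht.le]


lemma Hc_contOn {c : ℝ} (hc : 0 < c) (f₁ : ℝ → ℝ) (hf₁ : Continuous f₁) :
    ContinuousOn (fun u => ∫ v in (0:ℝ)..u, Y c (u - v) * f₁ v) (Ici 0) := by
  set J : ℝ → ℝ := fun u => ∫ x in (0:ℝ)..1, (1-x)^(c-1) * f₁ (u*x) with hJ
  have hJc : Continuous J := by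
    rw [continuous_iff_continuousAt]
    intro u₀
    obtain ⟨C, hC⟩ := isCompact_Icc.exists_bound_of_continuousOn
      (s := Icc (-(|u₀|+1)) (|u₀|+1)) hf₁.continuousOn
    refine intervalIntegral.continuousAt_of_dominated_interval
      (bound := fun x => (1-x)^(c-1) * C) ?_ ?_ ?_ ?_
    · filter_upwards with u
      refine Measurable.aestronglyMeasurable ?_
      have h0 : Measurable fun x : ℝ => x ^ (c-1) := by measurability
      exact (h0.comp (measurable_const.sub measurable_id)).mul
        (hf₁.measurable.comp (measurable_id.const_mul u))
    · filter_upwards [Metric.ball_mem_nhds u₀ zero_lt_one] with u hu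
      filter_upwards with x hx
      rw [uIoc_of_le zero_le_one] at hx
      have hx0 : 0 < x := hx.1
      have hx1 : x ≤ 1 := hx.2
      have h1x : 0 ≤ 1 - x := by linarith
      have hux : u * x ∈ Icc (-(|u₀|+1)) (|u₀|+1) := by
        rw [Metric.mem_ball, Real.dist_eq] at hu
        have h1 : |u * x| ≤ |u| := by
          rw [abs_mul, abs_of_nonneg hx0.le]
          nlinarith [abs_nonneg u]
        have h2 : |u| ≤ |u₀| + 1 := by
          have := abs_sub_abs_le_abs_sub u u₀
          linarith
        rw [Set.mem_Icc]
        constructor <;> [linarith [neg_abs_le (u*x)]; linarith [le_abs_self (u*x)]]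
      rw [norm_mul, Real.norm_eq_abs, Real.norm_eq_abs, abs_of_nonneg (Real.rpow_nonneg h1x _)]
      exact mul_le_mul_of_nonneg_left (hC _ hux) (Real.rpow_nonneg h1x _)
    · have h1 := (intervalIntegral.intervalIntegrable_rpow'
        (a := (0:ℝ)) (b := 1) (r := c - 1) (by linarith)).comp_sub_left 1
      simpa using (h1.symm.mul_const C)
    · filter_upwards with x _
      exact (continuous_const.mul (hf₁.comp (continuous_id.mul continuous_const))).continuousAt
  have key : ∀ u ∈ Ici (0:ℝ),
      (∫ v in (0:ℝ)..u, Y c (u - v) * f₁ v) = u ^ c / Real.Gamma c * J u := by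
    intro u hu
    rcases eq_or_lt_of_le (Set.mem_Ici.mp hu : (0:ℝ) ≤ u) with h | h
    · simp [← h, Real.zero_rpow hc.ne']
    · have sub := intervalIntegral.integral_comp_mul_add
        (f := fun v => Y c (u - v) * f₁ v) (a := 0) (b := 1) h.ne' 0
      simp only [mul_zero, add_zero, mul_one] at sub
      have e1 : ∫ x in (0:ℝ)..1, Y c (u - u*x) * f₁ (u*x)
          = ∫ x in (0:ℝ)..1, (u^(c-1) / Real.Gamma c) * ((1-x)^(c-1) * f₁ (u*x)) := by
        refine intervalIntegral.integral_congr fun x hx => ?_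
        rw [uIcc_of_le zero_le_one] at hx
        have h1x : 0 ≤ 1 - x := by linarith [hx.2]
        have e2 : u - u*x = u * (1-x) := by ring
        rw [e2, Y, Real.mul_rpow h.le h1x]
        field_simp
      rw [e1, intervalIntegral.integral_const_mul] at sub
      have : (∫ v in (0:ℝ)..u, Y c (u - v) * f₁ v)
          = u • (u ^ (c-1) / Real.Gamma c * J u) := by
        rw [sub, smul_inv_smul₀ h.ne']
      rw [this, smul_eq_mul]
      have hpow : u ^ c = u * u ^ (c-1) := by
        rw [show c = 1 + (c-1) by ring, Real.rpow_add h, Real.rpow_one]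
        ring_nf
      rw [hpow]
      ring
  refine ContinuousOn.congr ?_ key
  refine ContinuousOn.mul (ContinuousOn.div_const ?_ _) hJc.continuousOn
  intro u hu
  exact ((Real.continuousAt_rpow_const u c (Or.inr hc.le)).continuousWithinAt)

lemma Y_one (s : ℝ) : Y 1 s = 1 := by
  simp [Y, Real.Gamma_one]

theorem caputo_from_integral (α : ℝ) (hα : 0 < α) (hα1 : α < 1)
    (f f' g : ℝ → ℝ)
    (hf : ∀ t ∈ Ici (0:ℝ), HasDerivWithinAt f (f' t) (Ici 0) t)
    (hf' : ContinuousOn f' (Ici 0))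
    (hg : ContinuousOn g (Ici 0))
    (h : ∀ t : ℝ, 0 ≤ t → f t - f 0 = ∫ s in (0:ℝ)..t, Y α s * g (t - s)) :
    ∀ t : ℝ, 0 ≤ t → (∫ s in (0:ℝ)..t, Y (1 - α) s * f' (t - s)) = g t := by
  intro t ht
  have hc : 0 < 1 - α := by linarith
  set c := 1 - α with hcdef
  set f₁ : ℝ → ℝ := fun v => f' (max v 0) with hf₁def
  set g₁ : ℝ → ℝ := fun v => g (max v 0) with hg₁def
  have hf₁c : Continuous f₁ :=
    hf'.comp_continuous (continuous_id.max continuous_const) (fun x => Set.mem_Ici.mpr (le_max_right _ _))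
  have hg₁c : Continuous g₁ :=
    hg.comp_continuous (continuous_id.max continuous_const) (fun x => Set.mem_Ici.mpr (le_max_right _ _))
  have hf₁eq : ∀ v, 0 ≤ v → f₁ v = f' v := fun v hv => by
    rw [hf₁def]; simp [max_eq_left hv]
  have hg₁eq : ∀ v, 0 ≤ v → g₁ v = g v := fun v hv => by
    rw [hg₁def]; simp [max_eq_left hv]
  set Hc : ℝ → ℝ := fun u => ∫ v in (0:ℝ)..u, Y c (u - v) * f₁ v with hHc
  -- FTC for f
  have hfc : ContinuousOn f (Ici 0) := fun x hx => (hf x hx).continuousWithinAt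
  have ftc : ∀ u : ℝ, 0 ≤ u → f u - f 0 = ∫ v in (0:ℝ)..u, f' v := by
    intro u hu
    symm
    refine intervalIntegral.integral_eq_sub_of_hasDeriv_right_of_le hu
      (hfc.mono (fun x hx => hx.1)) ?_ ?_
    · intro x hx
      exact (hf x (le_of_lt hx.1)).mono (fun y hy => le_trans hx.1.le (le_of_lt hy))
    · exact (hf'.mono (fun x hx => by rw [uIcc_of_le hu] at hx; exact hx.1)).intervalIntegrable
  -- key identity
  have key : ∀ T : ℝ, 0 ≤ T → (∫ u in (0:ℝ)..T, Hc u) = ∫ u in (0:ℝ)..T, g₁ u := by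
    intro T hT
    rcases eq_or_lt_of_le hT with h0 | hTpos
    · rw [← h0]; simp
    have e1 : (∫ u in (0:ℝ)..T, Hc u)
        = ∫ u in (0:ℝ)..T, ∫ v in (0:ℝ)..u, Y 1 (T-u) * (Y c (u-v) * f₁ v) := by
      refine intervalIntegral.integral_congr fun u hu => ?_
      rw [hHc]
      refine (intervalIntegral.integral_congr fun v hv => ?_)
      rw [Y_one, one_mul]
    have e2 := fub one_pos hc f₁ hf₁c hTpos
    have innerf : ∀ u, 0 ≤ u → f u - f 0 = ∫ v in (0:ℝ)..u, Y 1 (u-v) * f₁ v := by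
      intro u hu
      rw [ftc u hu]
      refine intervalIntegral.integral_congr fun v hv => ?_
      rw [uIcc_of_le hu] at hv
      rw [Y_one, one_mul, hf₁eq v hv.1]
    have e3 : (∫ u in (0:ℝ)..T, Y c (T-u) * (f u - f 0))
        = ∫ v in (0:ℝ)..T, Y (c+1) (T-v) * f₁ v := by
      rw [← fub hc one_pos f₁ hf₁c hTpos]
      refine intervalIntegral.integral_congr fun u hu => ?_
      rw [uIcc_of_le hTpos.le] at hu
      rw [innerf u hu.1, ← intervalIntegral.integral_const_mul]
    have hrefl : ∀ u, 0 ≤ u → f u - f 0 = ∫ v in (0:ℝ)..u, Y α (u-v) * g₁ v := by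
      intro u hu
      rw [h u hu]
      have e := intervalIntegral.integral_comp_sub_left (a := 0) (b := u) (fun v => Y α (u - v) * g₁ v) u
      rw [sub_self, sub_zero] at e
      rw [← e]
      refine intervalIntegral.integral_congr fun s hs => ?_
      rw [uIcc_of_le hu] at hs
      rw [sub_sub_cancel, hg₁eq _ (by linarith [hs.2] : 0 ≤ u - s)]
    have e4 : (∫ u in (0:ℝ)..T, Y c (T-u) * (f u - f 0)) = ∫ v in (0:ℝ)..T, g₁ v := by
      have e5 : (∫ u in (0:ℝ)..T, Y c (T-u) * (f u - f 0))
          = ∫ u in (0:ℝ)..T, ∫ v in (0:ℝ)..u, Y c (T-u) * (Y α (u-v) * g₁ v) := by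
        refine intervalIntegral.integral_congr fun u hu => ?_
        rw [uIcc_of_le hTpos.le] at hu
        rw [hrefl u hu.1, ← intervalIntegral.integral_const_mul]
      rw [e5, fub hc hα g₁ hg₁c hTpos]
      refine intervalIntegral.integral_congr fun v hv => ?_
      rw [hcdef, show (1 - α) + α = 1 by ring, Y_one, one_mul]
    calc (∫ u in (0:ℝ)..T, Hc u)
        = ∫ v in (0:ℝ)..T, Y (1+c) (T-v) * f₁ v := by rw [e1, e2]
      _ = ∫ v in (0:ℝ)..T, Y (c+1) (T-v) * f₁ v := by rw [add_comm]
      _ = ∫ u in (0:ℝ)..T, Y c (T-u) * (f u - f 0) := e3.symm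
      _ = ∫ v in (0:ℝ)..T, g₁ v := e4
  -- differentiate
  have hHcont : ContinuousOn Hc (Ici 0) := Hc_contOn hc f₁ hf₁c
  have hII : IntervalIntegrable Hc volume 0 t :=
    (hHcont.mono (fun x hx => by rw [uIcc_of_le ht] at hx; exact hx.1)).intervalIntegrable
  have hgII : IntervalIntegrable g₁ volume 0 t := hg₁c.continuousOn.intervalIntegrable
  have hsubIoi : Ioi t ⊆ Ici (0:ℝ) := fun x hx => le_trans ht (le_of_lt hx)
  have hΦ : HasDerivWithinAt (fun T => ∫ u in (0:ℝ)..T, Hc u) (Hc t) (Ici t) t :=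
    intervalIntegral.integral_hasDerivWithinAt_right hII
      ((hHcont.mono hsubIoi).stronglyMeasurableAtFilter_nhdsWithin measurableSet_Ioi t)
      ((hHcont t ht).mono hsubIoi)
  have hΨ : HasDerivWithinAt (fun T => ∫ u in (0:ℝ)..T, g₁ u) (g₁ t) (Ici t) t :=
    intervalIntegral.integral_hasDerivWithinAt_right hgII
      (hg₁c.stronglyMeasurableAtFilter _ _)
      hg₁c.continuousAt.continuousWithinAt
  have hΦ' : HasDerivWithinAt (fun T => ∫ u in (0:ℝ)..T, Hc u) (g₁ t) (Ici t) t := by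
    refine hΨ.congr (fun T hT => key T (le_trans ht hT)) (key t ht)
  have hud : UniqueDiffWithinAt ℝ (Ici t) t := uniqueDiffOn_Ici t t self_mem_Ici
  have hHg : Hc t = g₁ t := (hΦ.derivWithin hud).symm.trans (hΦ'.derivWithin hud)
  have goalA : (∫ s in (0:ℝ)..t, Y c s * f' (t - s)) = Hc t := by
    show (∫ s in (0:ℝ)..t, Y c s * f' (t - s)) = ∫ v in (0:ℝ)..t, Y c (t - v) * f₁ v
    have e := intervalIntegral.integral_comp_sub_left (a := 0) (b := t) (fun v => Y c (t - v) * f₁ v) t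
    rw [sub_self, sub_zero] at e
    rw [← e]
    refine intervalIntegral.integral_congr fun s hs => ?_
    rw [uIcc_of_le ht] at hs
    rw [sub_sub_cancel, hf₁eq _ (by linarith [hs.2] : 0 ≤ t - s)]
  rw [goalA, hHg, hg₁eq t ht]
end

section
/- Let β : [0,∞) → [0,∞) be continuous and bounded with ∫₀^∞ β = +∞, ψ(t) = e^{−∫₀^t β(s)ds}, φ = βψ. Let n⁰ ∈ L¹(0,∞), n⁰ ≥ 0, and let N : [0,∞) → ℝ be a continuous nonnegative function satisfying the renewal equation N(t) = (φ * N)(t) + ∫₀^∞ (φ(a+t)/ψ(a)) n⁰(a) da. Then (ψ * N)(t) = ∫₀^∞ n⁰(a) da − ∫₀^∞ (ψ(a+t)/ψ(a)) n⁰(a) da for all t ≥ 0, and consequently (ψ * N)(t) → ∫₀^∞ n⁰(a) da as t → ∞. -/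
open MeasureTheory intervalIntegral Real Set Filter

theorem renewal_convolution_limit (β : ℝ → ℝ)
    (hβc : Continuous β) (hβ0 : ∀ a, 0 ≤ β a) (hβb : ∃ C, ∀ a, β a ≤ C)
    (hβinf : ∫⁻ a in Ioi (0:ℝ), ENNReal.ofReal (β a) = ⊤)
    (ψ φ : ℝ → ℝ) (hψ : ∀ t, ψ t = Real.exp (-∫ s in (0:ℝ)..t, β s))
    (hφ : ∀ t, φ t = β t * ψ t)
    (n0 : ℝ → ℝ) (hn0 : ∀ a, 0 ≤ n0 a) (hn0i : IntegrableOn n0 (Ioi 0))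
    (N : ℝ → ℝ) (hNc : Continuous N) (hN0 : ∀ t, 0 ≤ N t)
    (hren : ∀ t : ℝ, 0 ≤ t →
      N t = (∫ s in (0:ℝ)..t, φ s * N (t - s)) +
        ∫ a in Ioi (0:ℝ), (φ (a + t) / ψ a) * n0 a) :
    (∀ t : ℝ, 0 ≤ t →
      (∫ s in (0:ℝ)..t, ψ s * N (t - s)) =
        (∫ a in Ioi (0:ℝ), n0 a) - ∫ a in Ioi (0:ℝ), (ψ (a + t) / ψ a) * n0 a) ∧
    Tendsto (fun t => ∫ s in (0:ℝ)..t, ψ s * N (t - s)) atTop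
      (nhds (∫ a in Ioi (0:ℝ), n0 a)) := by
  obtain ⟨C, hC⟩ := hβb
  have hC0 : 0 ≤ C := le_trans (hβ0 0) (hC 0)
  set B : ℝ → ℝ := fun x => ∫ s in (0:ℝ)..x, β s with hBdef
  have hBd : ∀ x : ℝ, HasDerivAt B (β x) x := fun x =>
    (hβc.integral_hasStrictDerivAt 0 x).hasDerivAt
  have hψB : ∀ x, ψ x = Real.exp (-B x) := hψ
  have hψpos : ∀ x, 0 < ψ x := fun x => by rw [hψB]; exact Real.exp_pos _
  have hψd : ∀ x, HasDerivAt ψ (-(φ x)) x := by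
    intro x
    have h1 := ((hBd x).neg).exp
    have hfn : ψ = fun y => Real.exp (-B y) := funext fun y => hψB y
    rw [hfn]
    convert h1 using 1
    · rfl
    show -(φ x) = Real.exp (-B x) * -β x
    rw [hφ, hψB]; ring
  have hψc : Continuous ψ := by
    rw [continuous_iff_continuousAt]; exact fun x => (hψd x).continuousAt
  have hφc : Continuous φ := by
    have : φ = fun x => β x * ψ x := funext hφ
    rw [this]; exact hβc.mul hψc
  have hφ0 : ∀ x, 0 ≤ φ x := fun x => by
    rw [hφ]; exact mul_nonneg (hβ0 x) (hψpos x).le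
  have hBmono : Monotone B := by
    intro x y hxy
    have h := intervalIntegral.integral_add_adjacent_intervals
      (hβc.intervalIntegrable (μ := volume) 0 x) (hβc.intervalIntegrable (μ := volume) x y)
    have h2 : 0 ≤ ∫ s in x..y, β s :=
      intervalIntegral.integral_nonneg hxy (fun u _ => hβ0 u)
    simp only [hBdef]; linarith
  have hψanti : Antitone ψ := fun x y hxy => by
    rw [hψB, hψB]; exact Real.exp_le_exp.mpr (neg_le_neg (hBmono hxy))
  have hB0 : B 0 = 0 := intervalIntegral.integral_same
  have hψ0 : ψ 0 = 1 := by rw [hψB, hB0, neg_zero, Real.exp_zero]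
  have hψ1 : ∀ x, 0 ≤ x → ψ x ≤ 1 := fun x hx => by
    have := hψanti hx
    rwa [hψ0] at this
  -- ∫₀ˢ φ = 1 - ψ s
  have hφint : ∀ s : ℝ, ∫ r in (0:ℝ)..s, φ r = 1 - ψ s := by
    intro s
    have h := intervalIntegral.integral_eq_sub_of_hasDerivAt
      (f := fun x => -ψ x) (f' := φ)
      (fun x _ => (hψd x).neg.congr_deriv (neg_neg _))
      (hφc.intervalIntegrable 0 s)
    refine h.trans ?_
    show -ψ s - -ψ 0 = 1 - ψ s
    rw [hψ0]; ring
  -- ∫₀ᵗ φ(a+v) dv = ψ a - ψ(a+t)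
  have hφshift : ∀ a t : ℝ, ∫ v in (0:ℝ)..t, φ (a + v) = ψ a - ψ (a + t) := by
    intro a t
    have hd : ∀ v : ℝ, HasDerivAt (fun v => -ψ (a + v)) (φ (a + v)) v := by
      intro v
      have h1 : HasDerivAt (fun v : ℝ => a + v) 1 v := (hasDerivAt_id v).const_add a
      have h2 := ((hψd (a + v)).comp v h1).neg
      exact h2.congr_deriv (by ring)
    have h := intervalIntegral.integral_eq_sub_of_hasDerivAt
      (f := fun v => -ψ (a + v)) (f' := fun v => φ (a + v))
      (fun v _ => hd v)
      ((hφc.comp (continuous_const.add continuous_id)).intervalIntegrable 0 t)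
    refine h.trans ?_
    show -ψ (a + t) - -ψ (a + 0) = ψ a - ψ (a + t)
    rw [add_zero]; ring
  -- ratio bound
  have hratio_le_one : ∀ a t : ℝ, 0 ≤ t → ψ (a + t) / ψ a ≤ 1 := fun a t ht =>
    (div_le_one (hψpos a)).mpr (hψanti (le_add_of_nonneg_right ht))
  have hratio_pos : ∀ a t : ℝ, 0 < ψ (a + t) / ψ a := fun a t =>
    div_pos (hψpos _) (hψpos _)
  have hφψbound : ∀ a v : ℝ, 0 ≤ v → φ (a + v) / ψ a ≤ C := by
    intro a v hv
    rw [hφ]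
    have h1 : β (a + v) * ψ (a + v) / ψ a = β (a + v) * (ψ (a + v) / ψ a) := by ring
    rw [h1]
    calc β (a + v) * (ψ (a + v) / ψ a) ≤ C * 1 :=
          mul_le_mul (hC _) (hratio_le_one a v hv) (hratio_pos a v).le hC0
      _ = C := mul_one C
  have hφψ0 : ∀ a v : ℝ, 0 ≤ φ (a + v) / ψ a := fun a v =>
    div_nonneg (hφ0 _) (hψpos a).le
  -- integrability of S t
  have hSaesm : ∀ t : ℝ, AEStronglyMeasurable (fun a => (ψ (a + t) / ψ a) * n0 a)
      (volume.restrict (Ioi (0:ℝ))) := by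
    intro t
    exact (((hψc.comp (continuous_id.add continuous_const)).div hψc
      (fun a => (hψpos a).ne')).aestronglyMeasurable).mul hn0i.aestronglyMeasurable
  have hSint : ∀ t : ℝ, 0 ≤ t →
      IntegrableOn (fun a => (ψ (a + t) / ψ a) * n0 a) (Ioi (0:ℝ)) := by
    intro t ht
    refine Integrable.mono' hn0i (hSaesm t) (ae_of_all _ fun a => ?_)
    rw [Real.norm_eq_abs, abs_of_nonneg (mul_nonneg (hratio_pos a t).le (hn0 a))]
    calc (ψ (a + t) / ψ a) * n0 a ≤ 1 * n0 a :=
          mul_le_mul_of_nonneg_right (hratio_le_one a t ht) (hn0 a)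
      _ = n0 a := one_mul _
  -- the key identity
  have key : ∀ t : ℝ, 0 ≤ t →
      (∫ s in (0:ℝ)..t, ψ s * N (t - s)) =
        (∫ a in Ioi (0:ℝ), n0 a) - ∫ a in Ioi (0:ℝ), (ψ (a + t) / ψ a) * n0 a := by
    intro t ht
    set μt := volume.restrict (Ioc (0:ℝ) t) with hμt
    set ν := volume.restrict (Ioi (0:ℝ)) with hν
    set R : ℝ → ℝ := fun v => ∫ a in Ioi (0:ℝ), (φ (a + v) / ψ a) * n0 a with hR
    -- Fubini for R
    set G : ℝ × ℝ → ℝ := fun p => (φ (p.2 + p.1) / ψ p.2) * n0 p.2 with hG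
    have hGint : Integrable G (μt.prod ν) := by
      have haesm : AEStronglyMeasurable G (μt.prod ν) := by
        refine AEStronglyMeasurable.mul ?_ ?_
        · exact ((hφc.comp (continuous_snd.add continuous_fst)).div
            (hψc.comp continuous_snd) (fun p => (hψpos p.2).ne')).aestronglyMeasurable
        · exact hn0i.aestronglyMeasurable.comp_quasiMeasurePreserving
            Measure.quasiMeasurePreserving_snd
      have hbd : Integrable (fun p : ℝ × ℝ => (1:ℝ) * (C * n0 p.2)) (μt.prod ν) :=
        Integrable.mul_prod (integrable_const 1) (hn0i.const_mul C)
      refine Integrable.mono' hbd haesm ?_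
      rw [hμt, hν, Measure.prod_restrict]
      refine (ae_restrict_mem (measurableSet_Ioc.prod measurableSet_Ioi)).mono ?_
      rintro ⟨v, a⟩ ⟨hv, _⟩
      simp only [hG, one_mul, Real.norm_eq_abs]
      rw [abs_of_nonneg (mul_nonneg (hφψ0 a v) (hn0 a))]
      exact mul_le_mul_of_nonneg_right (hφψbound a v hv.1.le) (hn0 a)
    have hRint : IntegrableOn R (Ioc (0:ℝ) t) := by
      have := hGint.integral_prod_left
      exact this
    have hIocR : ∫ v in Ioc (0:ℝ) t, R v =
        (∫ a in Ioi (0:ℝ), n0 a) - ∫ a in Ioi (0:ℝ), (ψ (a + t) / ψ a) * n0 a := by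
      have hswap := MeasureTheory.integral_integral_swap
        (f := fun v a => (φ (a + v) / ψ a) * n0 a) (μ := μt) (ν := ν) hGint
      have h1 : ∫ v in Ioc (0:ℝ) t, R v = ∫ (a : ℝ), (∫ (v : ℝ), (φ (a + v) / ψ a) * n0 a ∂μt) ∂ν := hswap
      rw [h1]
      have h2 : ∀ a : ℝ, a ∈ Ioi (0:ℝ) → (∫ (v : ℝ), (φ (a + v) / ψ a) * n0 a ∂μt)
          = n0 a - (ψ (a + t) / ψ a) * n0 a := by
        intro a _
        have h3 : ∀ v : ℝ, (φ (a + v) / ψ a) * n0 a = φ (a + v) * (n0 a / ψ a) := by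
          intro v; ring
        simp only [h3]
        rw [MeasureTheory.integral_mul_const]
        have h4 : ∫ (v : ℝ), φ (a + v) ∂μt = ∫ v in (0:ℝ)..t, φ (a + v) := by
          rw [intervalIntegral.integral_of_le ht]
        rw [h4, hφshift a t]
        field_simp [(hψpos a).ne']
      rw [MeasureTheory.setIntegral_congr_fun measurableSet_Ioi h2]
      rw [MeasureTheory.integral_sub hn0i (hSint t ht)]
    -- triangle Fubini
    set F : ℝ × ℝ → ℝ := fun p => if p.1 < p.2 then φ (p.2 - p.1) * N p.1 else 0 with hF
    have hFaesm : AEStronglyMeasurable F (μt.prod μt) := by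
      refine (StronglyMeasurable.ite (measurableSet_lt measurable_fst measurable_snd)
        ?_ ?_).aestronglyMeasurable
      · exact ((hφc.comp (continuous_snd.sub continuous_fst)).mul
          (hNc.comp continuous_fst)).stronglyMeasurable
      · exact stronglyMeasurable_const
    obtain ⟨Cφ, hCφ⟩ := (isCompact_Icc (a := (0:ℝ)) (b := t)).exists_bound_of_continuousOn
      hφc.continuousOn
    obtain ⟨CN, hCN⟩ := (isCompact_Icc (a := (0:ℝ)) (b := t)).exists_bound_of_continuousOn
      hNc.continuousOn
    have hFint : Integrable F (μt.prod μt) := by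
      refine Integrable.mono' (integrable_const (Cφ * CN)) hFaesm ?_
      rw [hμt, Measure.prod_restrict]
      refine (ae_restrict_mem (measurableSet_Ioc.prod measurableSet_Ioc)).mono ?_
      rintro ⟨u, v⟩ ⟨hu, hv⟩
      simp only [hF]
      by_cases huv : u < v
      · rw [if_pos huv, Real.norm_eq_abs, abs_mul]
        have h1 : v - u ∈ Icc (0:ℝ) t := ⟨by linarith [hu.1, huv], by linarith [hv.2, hu.1]⟩
        have h2 : u ∈ Icc (0:ℝ) t := ⟨hu.1.le, hu.2⟩
        have := hCφ _ h1
        have := hCN _ h2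
        have hCφ0 : 0 ≤ Cφ := le_trans (norm_nonneg _) (hCφ _ h1)
        calc |φ (v - u)| * |N u| ≤ Cφ * CN := by
              apply mul_le_mul (by simpa using hCφ _ h1) (by simpa using hCN _ h2)
                (abs_nonneg _) hCφ0
          _ = Cφ * CN := rfl
      · rw [if_neg huv]
        simp only [norm_zero]
        exact mul_nonneg (le_trans (norm_nonneg _) (hCφ 0 ⟨le_refl _, ht⟩))
          (le_trans (norm_nonneg _) (hCN 0 ⟨le_refl _, ht⟩))
    -- T : the convolution remainder
    have hT1 : ∀ u ∈ Ioc (0:ℝ) t, (1 - ψ (t - u)) * N u = ∫ v in Ioc (0:ℝ) t, F (u, v) := by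
      intro u hu
      have h0 : (fun v => F (u, v)) = (Ioi u).indicator (fun v => φ (v - u) * N u) := by
        funext v
        simp only [hF, Set.indicator, mem_Ioi]
      rw [h0, MeasureTheory.setIntegral_indicator measurableSet_Ioi]
      rw [show Ioc (0:ℝ) t ∩ Ioi u = Ioc u t by
        rw [Set.Ioc_inter_Ioi, sup_eq_right.mpr hu.1.le]]
      have h1 : ∫ v in Ioc u t, φ (v - u) * N u = ∫ v in u..t, φ (v - u) * N u := by
        rw [intervalIntegral.integral_of_le hu.2]
      rw [h1, intervalIntegral.integral_mul_const, intervalIntegral.integral_comp_sub_right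
        (fun x => φ x) u]
      simp only [sub_self]
      rw [hφint (t - u)]
    have hT2 : ∀ v ∈ Ioc (0:ℝ) t, (∫ u in Ioc (0:ℝ) t, F (u, v)) = N v - R v := by
      intro v hv
      have h0 : (fun u => F (u, v)) = (Iio v).indicator (fun u => φ (v - u) * N u) := by
        funext u
        simp only [hF, Set.indicator, mem_Iio]
      rw [h0, MeasureTheory.setIntegral_indicator measurableSet_Iio]
      rw [show Ioc (0:ℝ) t ∩ Iio v = Ioo 0 v by
        ext x
        simp only [mem_inter_iff, mem_Ioc, mem_Iio, mem_Ioo]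
        exact ⟨fun h => ⟨h.1.1, h.2⟩, fun h => ⟨⟨h.1, le_trans h.2.le hv.2⟩, h.2⟩⟩]
      rw [← integral_Ioc_eq_integral_Ioo]
      have h1 : ∫ u in Ioc (0:ℝ) v, φ (v - u) * N u = ∫ u in (0:ℝ)..v, φ (v - u) * N u := by
        rw [intervalIntegral.integral_of_le hv.1.le]
      rw [h1]
      have h2 : ∫ u in (0:ℝ)..v, φ (v - u) * N u
          = ∫ u in (0:ℝ)..v, (fun s => φ s * N (v - s)) (v - u) := by
        apply intervalIntegral.integral_congr
        intro u _
        simp [sub_sub_cancel]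
      rw [h2, intervalIntegral.integral_comp_sub_left (fun s => φ s * N (v - s)) v]
      simp only [sub_self, sub_zero]
      have h3 := hren v hv.1.le
      simp only [hR]
      linarith
    have hTswap : ∫ u in Ioc (0:ℝ) t, (1 - ψ (t - u)) * N u
        = (∫ v in Ioc (0:ℝ) t, N v) - ∫ v in Ioc (0:ℝ) t, R v := by
      have e1 : ∫ u in Ioc (0:ℝ) t, (1 - ψ (t - u)) * N u
          = ∫ (u : ℝ), (∫ (v : ℝ), F (u, v) ∂μt) ∂μt :=
        MeasureTheory.setIntegral_congr_fun measurableSet_Ioc hT1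
      have e2 := MeasureTheory.integral_integral_swap
        (f := fun u v => F (u, v)) (μ := μt) (ν := μt) hFint
      rw [e1, e2]
      have e3 : ∫ (v : ℝ), (∫ (u : ℝ), F (u, v) ∂μt) ∂μt
          = ∫ v in Ioc (0:ℝ) t, (N v - R v) :=
        MeasureTheory.setIntegral_congr_fun measurableSet_Ioc hT2
      rw [e3, MeasureTheory.integral_sub (hNc.integrableOn_Ioc) hRint]
    -- put it together
    have main1 : (∫ s in (0:ℝ)..t, ψ s * N (t - s)) = ∫ u in (0:ℝ)..t, ψ (t - u) * N u := by
      have h2 : ∫ u in (0:ℝ)..t, ψ (t - u) * N u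
          = ∫ u in (0:ℝ)..t, (fun s => ψ s * N (t - s)) (t - u) := by
        apply intervalIntegral.integral_congr
        intro u _
        simp [sub_sub_cancel]
      rw [h2, intervalIntegral.integral_comp_sub_left (fun s => ψ s * N (t - s)) t]
      simp
    have main2 : ∫ u in (0:ℝ)..t, ψ (t - u) * N u
        = (∫ u in (0:ℝ)..t, N u) - ∫ u in (0:ℝ)..t, (1 - ψ (t - u)) * N u := by
      have hcont : Continuous fun u : ℝ => (1 - ψ (t - u)) * N u := by
        apply Continuous.mul _ hNc
        exact continuous_const.sub (hψc.comp (continuous_const.sub continuous_id))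
      rw [← intervalIntegral.integral_sub (hNc.intervalIntegrable 0 t)
        (hcont.intervalIntegrable 0 t)]
      apply intervalIntegral.integral_congr
      intro u _
      ring
    rw [main1, main2, intervalIntegral.integral_of_le ht,
      intervalIntegral.integral_of_le ht, hTswap, hIocR]
    ring
  refine ⟨key, ?_⟩
  -- Tendsto part
  have hBtop : Tendsto B atTop atTop := by
    apply tendsto_atTop_atTop_of_monotone hBmono
    intro M
    by_contra h
    push_neg at h
    have hM0 : ∀ x, B x < M := fun x => h x
    have hlin : ∀ n : ℕ, ∫⁻ a in Ioc (0:ℝ) (n:ℝ), ENNReal.ofReal (β a) ≤ ENNReal.ofReal M := by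
      intro n
      have hint : IntegrableOn β (Ioc (0:ℝ) (n:ℝ)) := hβc.integrableOn_Ioc
      have heq : ∫⁻ a in Ioc (0:ℝ) (n:ℝ), ENNReal.ofReal (β a)
          = ENNReal.ofReal (∫ a in Ioc (0:ℝ) (n:ℝ), β a) :=
        (MeasureTheory.ofReal_integral_eq_lintegral_ofReal hint
          (ae_of_all _ hβ0)).symm
      rw [heq]
      apply ENNReal.ofReal_le_ofReal
      have hBn : ∫ a in Ioc (0:ℝ) (n:ℝ), β a = B (n:ℝ) :=
        (intervalIntegral.integral_of_le (by positivity : (0:ℝ) ≤ (n:ℝ))).symm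
      rw [hBn]
      exact (hM0 _).le
    have hsup : ∫⁻ a in Ioi (0:ℝ), ENNReal.ofReal (β a)
        = ⨆ n : ℕ, ∫⁻ a in Ioc (0:ℝ) (n:ℝ), ENNReal.ofReal (β a) := by
      have hmeas : Measurable (fun a => ENNReal.ofReal (β a)) :=
        hβc.measurable.ennreal_ofReal
      rw [← lintegral_indicator measurableSet_Ioi]
      have hptwise : (Ioi (0:ℝ)).indicator (fun a => ENNReal.ofReal (β a))
          = fun a => ⨆ n : ℕ, (Ioc (0:ℝ) (n:ℝ)).indicator (fun a => ENNReal.ofReal (β a)) a := by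
        funext a
        by_cases ha : 0 < a
        · obtain ⟨n, hn⟩ := exists_nat_ge a
          rw [Set.indicator_of_mem (mem_Ioi.mpr ha)]
          apply le_antisymm
          · exact le_iSup_of_le n (le_of_eq (Set.indicator_of_mem (mem_Ioc.mpr ⟨ha, hn⟩) (fun a => ENNReal.ofReal (β a))).symm)
          · exact iSup_le fun m => Set.indicator_le_self _ _ a
        · rw [Set.indicator_of_notMem (by simpa using ha)]
          symm
          simp only [ENNReal.iSup_eq_zero]
          intro n
          exact Set.indicator_of_notMem (fun hmem => ha hmem.1) _
      rw [hptwise, lintegral_iSup]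
      · congr 1
        funext n
        rw [lintegral_indicator measurableSet_Ioc]
      · exact fun n => hmeas.indicator measurableSet_Ioc
      · intro m n hmn
        apply Set.indicator_le_indicator_of_subset
        · exact Set.Ioc_subset_Ioc_right (by exact_mod_cast hmn)
        · exact fun a => zero_le
    rw [hsup] at hβinf
    have : (⨆ n : ℕ, ∫⁻ a in Ioc (0:ℝ) (n:ℝ), ENNReal.ofReal (β a)) ≤ ENNReal.ofReal M :=
      iSup_le hlin
    rw [hβinf] at this
    exact absurd this (by simp [ENNReal.ofReal_lt_top.ne])
  have htend0 : Tendsto (fun t => ∫ a in Ioi (0:ℝ), (ψ (a + t) / ψ a) * n0 a) atTop (nhds 0) := by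
    have h : Tendsto (fun t => ∫ a in Ioi (0:ℝ), (ψ (a + t) / ψ a) * n0 a) atTop
        (nhds (∫ a in Ioi (0:ℝ), (0:ℝ))) := by
      apply MeasureTheory.tendsto_integral_filter_of_dominated_convergence n0
      · exact Eventually.of_forall fun t => hSaesm t
      · filter_upwards [eventually_ge_atTop (0:ℝ)] with t ht
        refine ae_of_all _ fun a => ?_
        rw [Real.norm_eq_abs, abs_of_nonneg (mul_nonneg (hratio_pos a t).le (hn0 a))]
        calc (ψ (a + t) / ψ a) * n0 a ≤ 1 * n0 a :=
              mul_le_mul_of_nonneg_right (hratio_le_one a t ht) (hn0 a)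
          _ = n0 a := one_mul _
      · exact hn0i
      · refine ae_of_all _ fun a => ?_
        have h1 : Tendsto (fun t : ℝ => a + t) atTop atTop :=
          tendsto_atTop_add_const_left _ _ tendsto_id
        have h2 : Tendsto (fun t : ℝ => B (a + t)) atTop atTop := hBtop.comp h1
        have h3 : Tendsto (fun t : ℝ => Real.exp (-B (a + t))) atTop (nhds 0) :=
          Real.tendsto_exp_atBot.comp (tendsto_neg_atTop_atBot.comp h2)
        have h4 := h3.mul_const (n0 a / ψ a)
        rw [zero_mul] at h4
        refine h4.congr fun t => ?_
        rw [hψB (a + t)]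
        ring
    simpa using h
  have hfinal : Tendsto (fun t => (∫ a in Ioi (0:ℝ), n0 a)
      - ∫ a in Ioi (0:ℝ), (ψ (a + t) / ψ a) * n0 a) atTop
      (nhds (∫ a in Ioi (0:ℝ), n0 a)) := by
    have := tendsto_const_nhds (x := ∫ a in Ioi (0:ℝ), n0 a) (f := atTop (α := ℝ)) |>.sub htend0
    rwa [sub_zero] at this
  exact Tendsto.congr' (by
    filter_upwards [eventually_ge_atTop (0:ℝ)] with t ht
    exact (key t ht).symm) hfinal
end

section
/- Suppose ψ : [0,∞) → (0,1] is non-increasing with ψ(t) = Ψ t^{−α} + O(t^{−α−δ}) as t → ∞, for constants Ψ > 0, α ∈ (0,1), δ ∈ (0,1−α). Let n⁰ ≥ 0 with ∫₀^∞ n⁰(a)(1+a)^α da ≤ M. Then there exists a constant C (depending only on ψ) such that for all t ≥ 0, ∫₀^∞ (ψ(a+t)/ψ(a)) n⁰(a) da ≤ C M 2^α (1+t)^{−α}. -/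
open MeasureTheory intervalIntegral Real Set Filter

lemma aux_ratio (ψ : ℝ → ℝ) (Ψ α δ : ℝ)
    (hΨ : 0 < Ψ) (hα : 0 < α) (hδ : 0 < δ)
    (hψpos : ∀ t, 0 ≤ t → 0 < ψ t ∧ ψ t ≤ 1)
    (hψmono : ∀ s t : ℝ, 0 ≤ s → s ≤ t → ψ t ≤ ψ s)
    (hψasym : ∃ C₀ K : ℝ, 0 < C₀ ∧ 0 < K ∧ ∀ t : ℝ, K ≤ t →
      |ψ t - Ψ * t ^ (-α)| ≤ C₀ * t ^ (-α - δ)) :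
    ∃ C : ℝ, 0 < C ∧ ∀ a t : ℝ, 0 ≤ a → 0 ≤ t →
      ψ (a + t) ≤ C * ψ a * (1 + a) ^ α * (1 + t) ^ (-α) := by
  obtain ⟨C₀, K, hC₀, hK, hasym⟩ := hψasym
  set K' : ℝ := max 1 (max K ((2 * C₀ / Ψ) ^ (1 / δ))) with hK'def
  have hK'1 : (1:ℝ) ≤ K' := le_max_left _ _
  have hK'0 : (0:ℝ) < K' := lt_of_lt_of_le one_pos hK'1
  have hupper : ∀ s : ℝ, K' ≤ s → ψ s ≤ (Ψ + C₀) * s ^ (-α) := by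
    intro s hs
    have hs1 : (1:ℝ) ≤ s := hK'1.trans hs
    have hs0 : (0:ℝ) < s := lt_of_lt_of_le one_pos hs1
    have hsK : K ≤ s := le_trans (le_trans (le_max_left _ _) (le_max_right _ _)) hs
    have h := (abs_le.1 (hasym s hsK)).2
    have h2 : s ^ (-α - δ) ≤ s ^ (-α) :=
      Real.rpow_le_rpow_of_exponent_le hs1 (by linarith)
    nlinarith [mul_le_mul_of_nonneg_left h2 hC₀.le]
  have hlower : ∀ s : ℝ, K' ≤ s → Ψ / 2 * s ^ (-α) ≤ ψ s := by
    intro s hs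
    have hs1 : (1:ℝ) ≤ s := hK'1.trans hs
    have hs0 : (0:ℝ) < s := lt_of_lt_of_le one_pos hs1
    have hsK : K ≤ s := le_trans (le_trans (le_max_left _ _) (le_max_right _ _)) hs
    have hsx : (2 * C₀ / Ψ) ^ (1 / δ) ≤ s :=
      le_trans (le_trans (le_max_right _ _) (le_max_right _ _)) hs
    have hx0 : (0:ℝ) < 2 * C₀ / Ψ := by positivity
    have hxd : 2 * C₀ / Ψ ≤ s ^ δ := by
      have h1 : ((2 * C₀ / Ψ) ^ (1 / δ)) ^ δ ≤ s ^ δ :=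
        Real.rpow_le_rpow (by positivity) hsx hδ.le
      rwa [← Real.rpow_mul hx0.le, one_div_mul_cancel hδ.ne', Real.rpow_one] at h1
    have h := (abs_le.1 (hasym s hsK)).1
    have hsd : (0:ℝ) < s ^ δ := Real.rpow_pos_of_pos hs0 _
    have hsplit : s ^ (-α - δ) = s ^ (-α) * (s ^ δ)⁻¹ := by
      rw [← Real.rpow_neg hs0.le, ← Real.rpow_add hs0]; ring_nf
    have hCd : C₀ * (s ^ δ)⁻¹ ≤ Ψ / 2 := by
      rw [mul_inv_le_iff₀ hsd]
      calc C₀ = Ψ / 2 * (2 * C₀ / Ψ) := by field_simp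
        _ ≤ Ψ / 2 * s ^ δ := by nlinarith
    have hsa : (0:ℝ) < s ^ (-α) := Real.rpow_pos_of_pos hs0 _
    nlinarith [mul_le_mul_of_nonneg_left hCd hsa.le]
  set m : ℝ := ψ K' with hmdef
  have hm : 0 < m := (hψpos K' hK'0.le).1
  set C : ℝ := max ((1 + K') ^ α) (max ((Ψ + C₀) * 2 ^ α / m) (2 * (Ψ + C₀) / Ψ)) with hCdef
  have hC0 : 0 < C := lt_of_lt_of_le (Real.rpow_pos_of_pos (by linarith) α) (le_max_left _ _)
  refine ⟨C, hC0, fun a t ha ht => ?_⟩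
  have hpa : 0 < ψ a := (hψpos a ha).1
  have h1a0 : (0:ℝ) < 1 + a := by linarith
  have h1t0 : (0:ℝ) < 1 + t := by linarith
  have h1a : (1:ℝ) ≤ (1 + a) ^ α := Real.one_le_rpow (by linarith) hα.le
  have hTpos : (0:ℝ) < (1 + t) ^ (-α) := Real.rpow_pos_of_pos h1t0 _
  rcases le_or_gt t K' with htK | htK
  · -- small t case
    have h1 : ψ (a + t) ≤ ψ a := hψmono a (a + t) ha (by linarith)
    have h2 : (1 + K') ^ (-α) ≤ (1 + t) ^ (-α) :=
      Real.rpow_le_rpow_of_nonpos h1t0 (by linarith) (by linarith)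
    have h3 : (1:ℝ) ≤ (1 + K') ^ α * (1 + t) ^ (-α) := by
      have he : (1 + K') ^ α * (1 + K') ^ (-α) = 1 := by
        rw [← Real.rpow_add (by linarith)]; simp
      calc (1:ℝ) = (1 + K') ^ α * (1 + K') ^ (-α) := he.symm
        _ ≤ (1 + K') ^ α * (1 + t) ^ (-α) := by
            apply mul_le_mul_of_nonneg_left h2 (Real.rpow_pos_of_pos (by linarith) α).le
    have hCge : (1 + K') ^ α ≤ C := le_max_left _ _
    calc ψ (a + t) ≤ ψ a := h1
      _ = ψ a * 1 := (mul_one _).symm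
      _ ≤ ψ a * ((1 + K') ^ α * (1 + t) ^ (-α)) := by
          exact mul_le_mul_of_nonneg_left h3 hpa.le
      _ ≤ C * ψ a * (1 + a) ^ α * (1 + t) ^ (-α) := by
          nlinarith [mul_pos hpa hTpos, mul_le_mul_of_nonneg_left h1a hC0.le]
  · -- large t case
    have hub : ψ (a + t) ≤ (Ψ + C₀) * (a + t) ^ (-α) := hupper _ (by linarith)
    have h2 : (a + t) ^ (-α) ≤ t ^ (-α) :=
      Real.rpow_le_rpow_of_nonpos (by linarith) (by linarith) (by linarith)
    have ht0 : (0:ℝ) < t := lt_of_lt_of_le hK'0 htK.le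
    have h3 : t ^ (-α) ≤ 2 ^ α * (1 + t) ^ (-α) := by
      have h3a : (2 * t) ^ (-α) ≤ (1 + t) ^ (-α) :=
        Real.rpow_le_rpow_of_nonpos h1t0 (by nlinarith [hK'1.trans htK.le]) (by linarith)
      have h3b : (2 * t) ^ (-α) = 2 ^ (-α) * t ^ (-α) :=
        Real.mul_rpow (by norm_num) ht0.le
      have h3c : (2:ℝ) ^ α * 2 ^ (-α) = 1 := by
        rw [← Real.rpow_add (by norm_num)]; simp
      have h2apos : (0:ℝ) < (2:ℝ) ^ α := Real.rpow_pos_of_pos (by norm_num) _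
      calc t ^ (-α) = 2 ^ α * 2 ^ (-α) * t ^ (-α) := by rw [h3c, one_mul]
        _ = 2 ^ α * (2 * t) ^ (-α) := by rw [h3b]; ring
        _ ≤ 2 ^ α * (1 + t) ^ (-α) := mul_le_mul_of_nonneg_left h3a h2apos.le
    have hub2 : ψ (a + t) ≤ (Ψ + C₀) * (2 ^ α * (1 + t) ^ (-α)) :=
      hub.trans (mul_le_mul_of_nonneg_left (h2.trans h3) (by linarith))
    rcases le_or_gt a K' with haK | haK
    · -- a small
      have hma : m ≤ ψ a := hψmono a K' ha haK
      have hCge : (Ψ + C₀) * 2 ^ α / m ≤ C := le_trans (le_max_left _ _) (le_max_right _ _)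
      have h2apos : (0:ℝ) < (2:ℝ) ^ α := Real.rpow_pos_of_pos (by norm_num) _
      have step : (Ψ + C₀) * 2 ^ α ≤ C * ψ a * (1 + a) ^ α := by
        have h5 : (Ψ + C₀) * 2 ^ α / m * m ≤ C * ψ a := by
          calc (Ψ + C₀) * 2 ^ α / m * m ≤ C * m := by
                apply mul_le_mul_of_nonneg_right hCge hm.le
            _ ≤ C * ψ a := mul_le_mul_of_nonneg_left hma hC0.le
        rw [div_mul_cancel₀ _ hm.ne'] at h5
        exact h5.trans (le_mul_of_one_le_right (mul_pos hC0 hpa).le h1a)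
      calc ψ (a + t) ≤ (Ψ + C₀) * (2 ^ α * (1 + t) ^ (-α)) := hub2
        _ = (Ψ + C₀) * 2 ^ α * (1 + t) ^ (-α) := by ring
        _ ≤ C * ψ a * (1 + a) ^ α * (1 + t) ^ (-α) := by
            exact mul_le_mul_of_nonneg_right step hTpos.le
    · -- a large
      have ha0 : (0:ℝ) < a := lt_of_lt_of_le hK'0 haK.le
      have hlb : Ψ / 2 * a ^ (-α) ≤ ψ a := hlower a haK.le
      have key : a ^ α * (1 + t) ^ α ≤ (1 + a) ^ α * (a + t) ^ α := by
        rw [← Real.mul_rpow ha0.le h1t0.le, ← Real.mul_rpow h1a0.le (by linarith)]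
        exact Real.rpow_le_rpow (by positivity) (by nlinarith) hα.le
      have hAp : (0:ℝ) < a ^ α := Real.rpow_pos_of_pos ha0 _
      have hTp : (0:ℝ) < (1 + t) ^ α := Real.rpow_pos_of_pos h1t0 _
      have hSp : (0:ℝ) < (a + t) ^ α := Real.rpow_pos_of_pos (by linarith) _
      have hBp : (0:ℝ) < (1 + a) ^ α := Real.rpow_pos_of_pos h1a0 _
      have hratio : (a + t) ^ (-α) ≤ a ^ (-α) * (1 + a) ^ α * (1 + t) ^ (-α) := by
        rw [Real.rpow_neg (by linarith : (0:ℝ) ≤ a + t),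
            Real.rpow_neg ha0.le, Real.rpow_neg h1t0.le]
        rw [inv_eq_one_div, show (a ^ α)⁻¹ * (1 + a) ^ α * ((1 + t) ^ α)⁻¹
            = (1 + a) ^ α / (a ^ α * (1 + t) ^ α) by field_simp,
          div_le_div_iff₀ hSp (by positivity)]
        rw [one_mul]
        exact key
      have hCge : 2 * (Ψ + C₀) / Ψ ≤ C := le_trans (le_max_right _ _) (le_max_right _ _)
      calc ψ (a + t) ≤ (Ψ + C₀) * (a + t) ^ (-α) := hub
        _ ≤ (Ψ + C₀) * (a ^ (-α) * (1 + a) ^ α * (1 + t) ^ (-α)) := by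
            exact mul_le_mul_of_nonneg_left hratio (by linarith)
        _ = 2 * (Ψ + C₀) / Ψ * (Ψ / 2 * a ^ (-α)) * (1 + a) ^ α * (1 + t) ^ (-α) := by
            field_simp
        _ ≤ C * ψ a * (1 + a) ^ α * (1 + t) ^ (-α) := by
            have hq : (0:ℝ) < 2 * (Ψ + C₀) / Ψ := by positivity
            have h6 : 2 * (Ψ + C₀) / Ψ * (Ψ / 2 * a ^ (-α)) ≤ C * ψ a := by
              calc 2 * (Ψ + C₀) / Ψ * (Ψ / 2 * a ^ (-α))
                  ≤ 2 * (Ψ + C₀) / Ψ * ψ a := mul_le_mul_of_nonneg_left hlb hq.le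
                _ ≤ C * ψ a := mul_le_mul_of_nonneg_right hCge hpa.le
            apply mul_le_mul_of_nonneg_right _ hTpos.le
            exact mul_le_mul_of_nonneg_right h6 hBp.le

theorem quantified_renewal_tail (ψ : ℝ → ℝ) (Ψ α δ M : ℝ)
    (hΨ : 0 < Ψ) (hα : 0 < α) (hα1 : α < 1) (hδ : 0 < δ) (hδ1 : δ < 1 - α)
    (hψpos : ∀ t, 0 ≤ t → 0 < ψ t ∧ ψ t ≤ 1)
    (hψmono : ∀ s t : ℝ, 0 ≤ s → s ≤ t → ψ t ≤ ψ s)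
    (hψasym : ∃ C₀ K : ℝ, 0 < C₀ ∧ 0 < K ∧ ∀ t : ℝ, K ≤ t →
      |ψ t - Ψ * t ^ (-α)| ≤ C₀ * t ^ (-α - δ))
    (n0 : ℝ → ℝ) (hn0 : ∀ a, 0 ≤ n0 a)
    (hn0i : IntegrableOn (fun a => n0 a * (1 + a) ^ α) (Ioi 0))
    (hM : ∫ a in Ioi (0:ℝ), n0 a * (1 + a) ^ α ≤ M) :
    ∃ C : ℝ, 0 < C ∧ ∀ t : ℝ, 0 ≤ t →
      (∫ a in Ioi (0:ℝ), (ψ (a + t) / ψ a) * n0 a) ≤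
        C * M * 2 ^ α * (1 + t) ^ (-α) := by
  obtain ⟨C', hC', hCb⟩ := aux_ratio ψ Ψ α δ hΨ hα hδ hψpos hψmono hψasym
  have hM0 : 0 ≤ M := by
    refine le_trans (setIntegral_nonneg measurableSet_Ioi fun a ha => ?_) hM
    have ha0 : (0:ℝ) < a := ha
    exact mul_nonneg (hn0 a) (Real.rpow_nonneg (by linarith) _)
  refine ⟨C', hC', fun t ht => ?_⟩
  have h1t0 : (0:ℝ) < 1 + t := by linarith
  have hTpos : (0:ℝ) < (1 + t) ^ (-α) := Real.rpow_pos_of_pos h1t0 _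
  have hgi : Integrable (fun a => C' * (1 + t) ^ (-α) * (n0 a * (1 + a) ^ α))
      (volume.restrict (Ioi 0)) := hn0i.const_mul _
  have hmono : (∫ a in Ioi (0:ℝ), (ψ (a + t) / ψ a) * n0 a) ≤
      ∫ a in Ioi (0:ℝ), C' * (1 + t) ^ (-α) * (n0 a * (1 + a) ^ α) := by
    apply integral_mono_of_nonneg
    · filter_upwards [ae_restrict_mem measurableSet_Ioi] with a ha
      have ha0 : (0:ℝ) < a := ha
      have hpa : 0 < ψ a := (hψpos a ha0.le).1
      have hpat : 0 < ψ (a + t) := (hψpos (a + t) (by linarith)).1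
      exact mul_nonneg (div_nonneg hpat.le hpa.le) (hn0 a)
    · exact hgi
    · filter_upwards [ae_restrict_mem measurableSet_Ioi] with a ha
      have ha0 : (0:ℝ) < a := ha
      have hpa : 0 < ψ a := (hψpos a ha0.le).1
      have hb := hCb a t ha0.le ht
      have hdiv : ψ (a + t) / ψ a ≤ C' * (1 + a) ^ α * (1 + t) ^ (-α) := by
        rw [div_le_iff₀ hpa]
        nlinarith
      calc ψ (a + t) / ψ a * n0 a ≤ C' * (1 + a) ^ α * (1 + t) ^ (-α) * n0 a :=
            mul_le_mul_of_nonneg_right hdiv (hn0 a)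
        _ = C' * (1 + t) ^ (-α) * (n0 a * (1 + a) ^ α) := by ring
  have hint : (∫ a in Ioi (0:ℝ), C' * (1 + t) ^ (-α) * (n0 a * (1 + a) ^ α))
      = C' * (1 + t) ^ (-α) * ∫ a in Ioi (0:ℝ), n0 a * (1 + a) ^ α := by
    rw [MeasureTheory.integral_const_mul]
  have h2a : (1:ℝ) ≤ (2:ℝ) ^ α := Real.one_le_rpow one_le_two hα.le
  calc (∫ a in Ioi (0:ℝ), (ψ (a + t) / ψ a) * n0 a)
      ≤ C' * (1 + t) ^ (-α) * ∫ a in Ioi (0:ℝ), n0 a * (1 + a) ^ α := by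
        rw [← hint]; exact hmono
    _ ≤ C' * (1 + t) ^ (-α) * M :=
        mul_le_mul_of_nonneg_left hM (by positivity)
    _ ≤ C' * M * 2 ^ α * (1 + t) ^ (-α) := by
        nlinarith [mul_nonneg (mul_nonneg hC'.le hM0) hTpos.le]
end

section
/- Under the same assumptions as the moment conservation statement, the second moment of a mild solution of ∂ₜ^α ρ = D_α Δρ with D_α = σ²/(2dΨΓ(1−α)) grows as ∫|x|²ρ(t,dx) = ∫|x|²ρ⁰(dx) + (sin(πα)/(πα)) (σ²/Ψ) (∫ρ⁰(dx)) t^α for all t ≥ 0. -/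
open MeasureTheory Set Filter intervalIntegral Real

noncomputable def laplacian (d : ℕ) (φ : EuclideanSpace ℝ (Fin d) → ℝ)
    (x : EuclideanSpace ℝ (Fin d)) : ℝ :=
  ∑ i : Fin d, iteratedFDeriv ℝ 2 φ x
    ![EuclideanSpace.single i (1:ℝ), EuclideanSpace.single i (1:ℝ)]

noncomputable def th (u : ℝ) : ℝ := Real.smoothTransition ((4 - u)/3)
noncomputable def ps (u : ℝ) : ℝ := u * th u

lemma th_contDiff : ContDiff ℝ ((⊤:ℕ∞):WithTop ℕ∞) th := by
  have : th = Real.smoothTransition ∘ (fun u => (4 - u)/3) := rfl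
  rw [this]
  exact (Real.smoothTransition.contDiff (n:=⊤)).comp (((contDiff_const (c:=(4:ℝ))).sub contDiff_id).div_const 3)
lemma ps_contDiff : ContDiff ℝ ((⊤:ℕ∞):WithTop ℕ∞) ps := contDiff_id.mul th_contDiff
lemma th_one {u : ℝ} (h : u ≤ 1) : th u = 1 :=
  Real.smoothTransition.one_of_one_le (by linarith)
lemma th_zero {u : ℝ} (h : 4 ≤ u) : th u = 0 :=
  Real.smoothTransition.zero_of_nonpos (by linarith)
lemma th_nonneg (u : ℝ) : 0 ≤ th u := Real.smoothTransition.nonneg _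
lemma th_le_one (u : ℝ) : th u ≤ 1 := Real.smoothTransition.le_one _
lemma ps_one {u : ℝ} (h : u ≤ 1) : ps u = u := by rw [ps, th_one h, mul_one]
lemma ps_zero {u : ℝ} (h : 4 ≤ u) : ps u = 0 := by rw [ps, th_zero h, mul_zero]
lemma ps_nonneg {u : ℝ} (h : 0 ≤ u) : 0 ≤ ps u := mul_nonneg h (th_nonneg u)
lemma ps_le {u : ℝ} (h : 0 ≤ u) : ps u ≤ u := by
  calc u * th u ≤ u * 1 := by nlinarith [th_le_one u]
  _ = u := mul_one u

lemma deriv_ps_lt {u : ℝ} (h : u < 1) : deriv ps u = 1 := by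
  have he : ps =ᶠ[nhds u] id := by
    filter_upwards [eventually_lt_nhds h] with v hv
    exact ps_one hv.le
  rw [he.deriv_eq, deriv_id]
lemma deriv_ps_gt {u : ℝ} (h : 4 < u) : deriv ps u = 0 := by
  have he : ps =ᶠ[nhds u] (fun _ => 0) := by
    filter_upwards [eventually_gt_nhds h] with v hv
    exact ps_zero hv.le
  rw [he.deriv_eq, deriv_const]
lemma deriv2_ps_lt {u : ℝ} (h : u < 1) : deriv (deriv ps) u = 0 := by
  have he : deriv ps =ᶠ[nhds u] (fun _ => 1) := by
    filter_upwards [eventually_lt_nhds h] with v hv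
    exact deriv_ps_lt hv
  rw [he.deriv_eq, deriv_const]
lemma deriv2_ps_gt {u : ℝ} (h : 4 < u) : deriv (deriv ps) u = 0 := by
  have he : deriv ps =ᶠ[nhds u] (fun _ => 0) := by
    filter_upwards [eventually_gt_nhds h] with v hv
    exact deriv_ps_gt hv
  rw [he.deriv_eq, deriv_const]
lemma deriv_th_lt {u : ℝ} (h : u < 1) : deriv th u = 0 := by
  have he : th =ᶠ[nhds u] (fun _ => 1) := by
    filter_upwards [eventually_lt_nhds h] with v hv
    exact th_one hv.le
  rw [he.deriv_eq, deriv_const]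
lemma deriv_th_gt {u : ℝ} (h : 4 < u) : deriv th u = 0 := by
  have he : th =ᶠ[nhds u] (fun _ => 0) := by
    filter_upwards [eventually_gt_nhds h] with v hv
    exact th_zero hv.le
  rw [he.deriv_eq, deriv_const]
lemma deriv2_th_gt {u : ℝ} (h : 4 < u) : deriv (deriv th) u = 0 := by
  have he : deriv th =ᶠ[nhds u] (fun _ => 0) := by
    filter_upwards [eventually_gt_nhds h] with v hv
    exact deriv_th_gt hv
  rw [he.deriv_eq, deriv_const]

open Topology

variable {d : ℕ}

lemma normsq_contDiff {n : WithTop ℕ∞} :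
    ContDiff ℝ n (fun y : EuclideanSpace ℝ (Fin d) => ‖y‖^2) := contDiff_norm_sq ℝ

lemma radial_contDiff {ψ : ℝ → ℝ} (hψ : ContDiff ℝ ((⊤:ℕ∞):WithTop ℕ∞) ψ) :
    ContDiff ℝ ((⊤:ℕ∞):WithTop ℕ∞) (fun y : EuclideanSpace ℝ (Fin d) => ψ (‖y‖^2)) :=
  hψ.comp (normsq_contDiff)

-- first derivative of ψ(‖y‖²)
lemma radial_fderiv {ψ : ℝ → ℝ} (hψ : ContDiff ℝ ((⊤:ℕ∞):WithTop ℕ∞) ψ)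
    (y : EuclideanSpace ℝ (Fin d)) :
    fderiv ℝ (fun y : EuclideanSpace ℝ (Fin d) => ψ (‖y‖^2)) y
      = (deriv ψ (‖y‖^2)) • ((2:ℝ) • (innerSL ℝ y)) := by
  have hq : HasFDerivAt (fun y : EuclideanSpace ℝ (Fin d) => ‖y‖^2)
      ((2:ℝ) • (innerSL ℝ y)) y := by
    have := (hasStrictFDerivAt_norm_sq y).hasFDerivAt
    convert this using 1
    all_goals ext v; simp
  have hd : HasDerivAt ψ (deriv ψ (‖y‖^2)) (‖y‖^2) :=
    ((hψ.differentiable (by simp)) (‖y‖^2)).hasDerivAt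
  exact (hd.comp_hasFDerivAt y hq).fderiv

lemma radial_lap {ψ : ℝ → ℝ} (hψ : ContDiff ℝ ((⊤:ℕ∞):WithTop ℕ∞) ψ)
    (x : EuclideanSpace ℝ (Fin d)) :
    laplacian d (fun y : EuclideanSpace ℝ (Fin d) => ψ (‖y‖^2)) x
      = 4 * deriv (deriv ψ) (‖x‖^2) * ‖x‖^2 + 2*d*(deriv ψ (‖x‖^2)) := by
  set Φ : EuclideanSpace ℝ (Fin d) → ℝ := fun y => ψ (‖y‖^2) with hΦdef
  have hΦ : ContDiff ℝ ((⊤:ℕ∞):WithTop ℕ∞) Φ := radial_contDiff hψ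
  have hψ' : ContDiff ℝ ((⊤:ℕ∞):WithTop ℕ∞) (deriv ψ) := (contDiff_infty_iff_deriv.mp hψ).2
  have hdiff : DifferentiableAt ℝ (fderiv ℝ Φ) x := by
    have : ContDiff ℝ ((1:ℕ∞):WithTop ℕ∞) (fderiv ℝ Φ) :=
      hΦ.fderiv_right (by exact_mod_cast le_top)
    exact (this.differentiable (by simp)) x
  have key : ∀ i : Fin d,
      iteratedFDeriv ℝ 2 Φ x
        ![EuclideanSpace.single i (1:ℝ), EuclideanSpace.single i (1:ℝ)]
      = 4 * deriv (deriv ψ) (‖x‖^2) * (x i)^2 + 2 * deriv ψ (‖x‖^2) := by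
    intro i
    set e : EuclideanSpace ℝ (Fin d) := EuclideanSpace.single i (1:ℝ) with he
    rw [iteratedFDeriv_two_apply]
    have hm0 : (![e, e] : Fin 2 → EuclideanSpace ℝ (Fin d)) 0 = e := rfl
    have hm1 : (![e, e] : Fin 2 → EuclideanSpace ℝ (Fin d)) 1 = e := rfl
    rw [hm0, hm1]
    -- step 1 : fderiv (fderiv Φ) x e e = fderiv (fun y => fderiv Φ y e) x e
    have step1 : fderiv ℝ (fun y => (fderiv ℝ Φ y) e) x
        = (fderiv ℝ (fderiv ℝ Φ) x).flip e := by
      have := fderiv_clm_apply (𝕜 := ℝ) (c := fderiv ℝ Φ) (u := fun _ => e)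
        hdiff (differentiableAt_const e)
      simpa [fderiv_const] using this
    have step1' : fderiv ℝ (fderiv ℝ Φ) x e e
        = fderiv ℝ (fun y => (fderiv ℝ Φ y) e) x e := by
      rw [step1]; rfl
    rw [step1']
    -- step 2 : the scalar function y ↦ fderiv Φ y e
    have hfun : (fun y => (fderiv ℝ Φ y) e)
        = fun y => (deriv ψ (‖y‖^2)) * (((2:ℝ) • innerSL ℝ e) y) := by
      funext y
      rw [radial_fderiv hψ y]
      simp only [ContinuousLinearMap.smul_apply, innerSL_apply_apply, smul_eq_mul]
      rw [real_inner_comm y e]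
    -- derivative of c y = deriv ψ (‖y‖²)
    have hq : HasFDerivAt (fun y : EuclideanSpace ℝ (Fin d) => ‖y‖^2)
        ((2:ℝ) • (innerSL ℝ x)) x := by
      have := (hasStrictFDerivAt_norm_sq x).hasFDerivAt
      convert this using 1
      all_goals ext v; simp
    have hc : HasFDerivAt (fun y : EuclideanSpace ℝ (Fin d) => deriv ψ (‖y‖^2))
        ((deriv (deriv ψ) (‖x‖^2)) • ((2:ℝ) • innerSL ℝ x)) x := by
      have hd : HasDerivAt (deriv ψ) (deriv (deriv ψ) (‖x‖^2)) (‖x‖^2) :=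
        ((hψ'.differentiable (by simp)) (‖x‖^2)).hasDerivAt
      exact hd.comp_hasFDerivAt x hq
    have hb : HasFDerivAt (fun y : EuclideanSpace ℝ (Fin d) => ((2:ℝ) • innerSL ℝ e) y)
        ((2:ℝ) • innerSL ℝ e) x := ((2:ℝ) • innerSL ℝ e).hasFDerivAt
    have hprod : fderiv ℝ (fun y => deriv ψ (‖y‖^2) * ((2:ℝ) • innerSL ℝ e) y) x = _ :=
      (hc.mul hb).fderiv
    rw [hfun, hprod]
    have hee : (inner ℝ e e : ℝ) = 1 := by
      rw [he, EuclideanSpace.inner_single_left]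
      simp [EuclideanSpace.single_apply]
    have hxe : (inner ℝ x e : ℝ) = x i := by
      rw [he, EuclideanSpace.inner_single_right]; simp
    have hex : (inner ℝ e x : ℝ) = x i := by rw [real_inner_comm]; exact hxe
    simp only [ContinuousLinearMap.add_apply, ContinuousLinearMap.smul_apply,
      innerSL_apply_apply, smul_eq_mul, hee, hex, hxe]
    ring
  unfold laplacian
  rw [Finset.sum_congr rfl (fun i _ => key i)]
  rw [Finset.sum_add_distrib, Finset.sum_const]
  have hsum : ∑ i : Fin d, (x i)^2 = ‖x‖^2 := by
    rw [← real_inner_self_eq_norm_sq x]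
    rw [EuclideanSpace.inner_eq_star_dotProduct]; simp [dotProduct, sq]
  rw [← Finset.mul_sum, hsum]
  simp [Finset.card_univ]
  ring

-- compact support helper
lemma radial_hcs {f : ℝ → ℝ} {M : ℝ} (hM0 : 0 ≤ M)
    (hM : ∀ u, M < u → f u = 0) :
    HasCompactSupport (fun y : EuclideanSpace ℝ (Fin d) => f (‖y‖^2)) := by
  apply HasCompactSupport.intro (isCompact_closedBall (0 : EuclideanSpace ℝ (Fin d)) (Real.sqrt M))
  intro y hy
  simp only [Metric.mem_closedBall, dist_zero_right, not_le] at hy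
  apply hM
  calc M = Real.sqrt M ^ 2 := (Real.sq_sqrt hM0).symm
  _ < ‖y‖^2 := by
      apply pow_lt_pow_left₀ hy (Real.sqrt_nonneg M)
      norm_num

-- deriv of scaled functions
lemma deriv_scaled {f : ℝ → ℝ} (hf : ContDiff ℝ ((⊤:ℕ∞):WithTop ℕ∞) f) {c : ℝ} (hc : 0 < c) :
    deriv (fun u => f (u / c)) = fun u => deriv f (u / c) / c := by
  funext u
  have h2 : HasDerivAt f (deriv f (u/c)) (u/c) :=
    ((hf.differentiable (by simp)) (u/c)).hasDerivAt
  have h3 : HasDerivAt (fun u => f (u / c)) (deriv f (u/c) * (1/c)) u := by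
    simpa [Function.comp_def] using h2.comp u ((hasDerivAt_id u).div_const c)
  rw [h3.deriv]; ring

lemma scaled_contDiff {f : ℝ → ℝ} (hf : ContDiff ℝ ((⊤:ℕ∞):WithTop ℕ∞) f) {c : ℝ} :
    ContDiff ℝ ((⊤:ℕ∞):WithTop ℕ∞) (fun u => f (u / c)) :=
  hf.comp (contDiff_id.div_const c)

noncomputable def G (d : ℕ) (u : ℝ) : ℝ := 4 * deriv (deriv ps) u * u + 2*d*deriv ps u
noncomputable def H (d : ℕ) (u : ℝ) : ℝ := 4 * deriv (deriv th) u * u + 2*d*deriv th u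

lemma lap_phi {c : ℝ} (hc : 0 < c) (x : EuclideanSpace ℝ (Fin d)) :
    laplacian d (fun y => c * ps (‖y‖^2 / c)) x = G d (‖x‖^2/c) := by
  have hcd : ContDiff ℝ ((⊤:ℕ∞):WithTop ℕ∞) (fun u : ℝ => c * ps (u / c)) :=
    contDiff_const.mul (scaled_contDiff ps_contDiff)
  have h := radial_lap (d := d) hcd x
  have hd1 : deriv (fun u : ℝ => c * ps (u / c)) = fun u => deriv ps (u / c) := by
    funext u
    rw [deriv_const_mul]
    · rw [deriv_scaled ps_contDiff hc]
      field_simp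
    · exact ((scaled_contDiff ps_contDiff).differentiable (by simp)) u
  have hd2 : deriv (deriv (fun u : ℝ => c * ps (u / c)))
      = fun u => deriv (deriv ps) (u / c) / c := by
    rw [hd1, deriv_scaled (contDiff_infty_iff_deriv.mp ps_contDiff).2 hc]
  rw [h, hd2, hd1, G]
  field_simp

lemma lap_chi {c : ℝ} (hc : 0 < c) (x : EuclideanSpace ℝ (Fin d)) :
    laplacian d (fun y => th (‖y‖^2 / c)) x = H d (‖x‖^2/c) / c := by
  have h := radial_lap (d := d) (scaled_contDiff th_contDiff (c := c)) x
  have hd1 : deriv (fun u : ℝ => th (u / c)) = fun u => deriv th (u / c) / c :=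
    deriv_scaled th_contDiff hc
  have hd2 : deriv (deriv (fun u : ℝ => th (u / c)))
      = fun u => deriv (deriv th) (u / c) / c / c := by
    rw [hd1]
    have : (fun u : ℝ => deriv th (u / c) / c) = fun u => (fun v => deriv th (v/c)) u / c := rfl
    rw [this]
    funext u
    rw [deriv_div_const, deriv_scaled (contDiff_infty_iff_deriv.mp th_contDiff).2 hc]
  rw [h, hd2, hd1, H]
  field_simp
lemma ps_cd1 : ContDiff ℝ ((⊤:ℕ∞):WithTop ℕ∞) (deriv ps) := (contDiff_infty_iff_deriv.mp ps_contDiff).2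
lemma th_cd1 : ContDiff ℝ ((⊤:ℕ∞):WithTop ℕ∞) (deriv th) := (contDiff_infty_iff_deriv.mp th_contDiff).2

lemma G_lt {u : ℝ} (h : u < 1) : G d u = 2*d := by
  rw [G, deriv2_ps_lt h, deriv_ps_lt h]; ring
lemma G_gt {u : ℝ} (h : 4 < u) : G d u = 0 := by
  rw [G, deriv2_ps_gt h, deriv_ps_gt h]; ring
lemma H_gt {u : ℝ} (h : 4 < u) : H d u = 0 := by
  rw [H, deriv2_th_gt h, deriv_th_gt h]; ring
lemma G_cont : Continuous (G d) := by
  unfold G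
  exact ((continuous_const.mul (contDiff_infty_iff_deriv.mp ps_cd1).2.continuous).mul
    continuous_id).add (continuous_const.mul ps_cd1.continuous)
lemma H_cont : Continuous (H d) := by
  unfold H
  exact ((continuous_const.mul (contDiff_infty_iff_deriv.mp th_cd1).2.continuous).mul
    continuous_id).add (continuous_const.mul th_cd1.continuous)

lemma exists_bound_of_cutoff {f : ℝ → ℝ} (hf : Continuous f) (hz : ∀ u, 4 < u → f u = 0) :
    ∃ C : ℝ, 0 ≤ C ∧ ∀ u, 0 ≤ u → |f u| ≤ C := by
  obtain ⟨C, hC⟩ := (isCompact_Icc (a := (0:ℝ)) (b := 4)).exists_bound_of_continuousOn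
    hf.continuousOn
  refine ⟨max C 0, le_max_right _ _, fun u hu => ?_⟩
  rcases le_or_gt u 4 with h | h
  · exact le_trans (by simpa [Real.norm_eq_abs] using hC u ⟨hu, h⟩) (le_max_left _ _)
  · simp [hz u h]

lemma integral_weight {α t : ℝ} (hα : 0 < α) (ht : 0 ≤ t) :
    ∫ s in (0:ℝ)..t, (t - s) ^ (α - 1) = t ^ α / α := by
  rw [intervalIntegral.integral_comp_sub_left (fun u => u ^ (α - 1)) t]
  simp only [sub_self, sub_zero]
  rw [integral_rpow (Or.inl (by linarith))]
  rw [sub_add_cancel, Real.zero_rpow hα.ne']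
  ring

lemma intervalIntegrable_weight {α t : ℝ} (hα : 0 < α) :
    IntervalIntegrable (fun s => (t - s) ^ (α - 1)) MeasureTheory.volume 0 t := by
  have := (intervalIntegrable_rpow' (a := t - t) (b := t - 0) (r := α - 1)
    (by linarith)).comp_sub_left t
  simpa using this.symm

section family
variable {c : ℝ}

lemma phi_contDiff : ContDiff ℝ 2 (fun y : EuclideanSpace ℝ (Fin d) => c * ps (‖y‖^2 / c)) := by
  have : ContDiff ℝ ((⊤:ℕ∞):WithTop ℕ∞)
      (fun y : EuclideanSpace ℝ (Fin d) => c * ps (‖y‖^2 / c)) :=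
    (contDiff_const.mul (scaled_contDiff ps_contDiff)).comp normsq_contDiff
  exact this.of_le (WithTop.coe_le_coe.mpr le_top)

lemma chi_contDiff : ContDiff ℝ 2 (fun y : EuclideanSpace ℝ (Fin d) => th (‖y‖^2 / c)) := by
  have : ContDiff ℝ ((⊤:ℕ∞):WithTop ℕ∞)
      (fun y : EuclideanSpace ℝ (Fin d) => th (‖y‖^2 / c)) :=
    (scaled_contDiff th_contDiff).comp normsq_contDiff
  exact this.of_le (WithTop.coe_le_coe.mpr le_top)

lemma phi_hcs (hc : 0 < c) :
    HasCompactSupport (fun y : EuclideanSpace ℝ (Fin d) => c * ps (‖y‖^2 / c)) := by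
  apply radial_hcs (f := fun u => c * ps (u / c)) (M := 4 * c) (by linarith)
  intro u hu
  rw [ps_zero (by rw [le_div_iff₀ hc]; linarith), mul_zero]

lemma chi_hcs (hc : 0 < c) :
    HasCompactSupport (fun y : EuclideanSpace ℝ (Fin d) => th (‖y‖^2 / c)) := by
  apply radial_hcs (f := fun u => th (u / c)) (M := 4 * c) (by linarith)
  intro u hu
  rw [th_zero (by rw [le_div_iff₀ hc]; linarith)]

lemma phi_cont : Continuous (fun y : EuclideanSpace ℝ (Fin d) => c * ps (‖y‖^2 / c)) :=
  (phi_contDiff (c := c)).continuous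
lemma chi_cont : Continuous (fun y : EuclideanSpace ℝ (Fin d) => th (‖y‖^2 / c)) :=
  (chi_contDiff (c := c)).continuous

lemma phi_nonneg (hc : 0 < c) (y : EuclideanSpace ℝ (Fin d)) : 0 ≤ c * ps (‖y‖^2 / c) :=
  mul_nonneg hc.le (ps_nonneg (by positivity))

lemma phi_le (hc : 0 < c) (y : EuclideanSpace ℝ (Fin d)) : c * ps (‖y‖^2 / c) ≤ ‖y‖^2 := by
  have h1 := ps_le (u := ‖y‖^2 / c) (by positivity)
  have h2 : c * ps (‖y‖^2/c) ≤ c * (‖y‖^2/c) := mul_le_mul_of_nonneg_left h1 hc.le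
  calc c * ps (‖y‖^2/c) ≤ c * (‖y‖^2/c) := h2
  _ = ‖y‖^2 := by field_simp

lemma phi_eq (hc : 0 < c) {y : EuclideanSpace ℝ (Fin d)} (h : ‖y‖^2 ≤ c) :
    c * ps (‖y‖^2 / c) = ‖y‖^2 := by
  rw [ps_one (by rw [div_le_one hc]; linarith)]
  field_simp

lemma chi_eq (hc : 0 < c) {y : EuclideanSpace ℝ (Fin d)} (h : ‖y‖^2 ≤ c) :
    th (‖y‖^2 / c) = 1 :=
  th_one (by rw [div_le_one hc]; linarith)

lemma lap_phi_cont (hc : 0 < c) :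
    Continuous (laplacian d (fun y : EuclideanSpace ℝ (Fin d) => c * ps (‖y‖^2 / c))) := by
  have h : laplacian d (fun y : EuclideanSpace ℝ (Fin d) => c * ps (‖y‖^2 / c))
      = fun x => G d (‖x‖^2 / c) := funext (lap_phi hc)
  rw [h]
  exact G_cont.comp ((contDiff_norm_sq ℝ (n := 1)).continuous.div_const c)

lemma lap_chi_cont (hc : 0 < c) :
    Continuous (laplacian d (fun y : EuclideanSpace ℝ (Fin d) => th (‖y‖^2 / c))) := by
  have h : laplacian d (fun y : EuclideanSpace ℝ (Fin d) => th (‖y‖^2 / c))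
      = fun x => H d (‖x‖^2 / c) / c := funext (lap_chi hc)
  rw [h]
  exact (H_cont.comp ((contDiff_norm_sq ℝ (n := 1)).continuous.div_const c)).div_const c

lemma lap_phi_hcs (hc : 0 < c) :
    HasCompactSupport (laplacian d (fun y : EuclideanSpace ℝ (Fin d) => c * ps (‖y‖^2 / c))) := by
  have h : laplacian d (fun y : EuclideanSpace ℝ (Fin d) => c * ps (‖y‖^2 / c))
      = fun x => G d (‖x‖^2 / c) := funext (lap_phi hc)
  rw [h]
  exact radial_hcs (f := fun u => G d (u / c)) (M := 4 * c) (by linarith)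
    (fun u hu => G_gt (by rw [lt_div_iff₀ hc]; linarith))

lemma lap_chi_hcs (hc : 0 < c) :
    HasCompactSupport (laplacian d (fun y : EuclideanSpace ℝ (Fin d) => th (‖y‖^2 / c))) := by
  have h : laplacian d (fun y : EuclideanSpace ℝ (Fin d) => th (‖y‖^2 / c))
      = fun x => H d (‖x‖^2 / c) / c := funext (lap_chi hc)
  rw [h]
  apply radial_hcs (f := fun u => H d (u / c) / c) (M := 4 * c) (by linarith)
  intro u hu
  rw [H_gt (by rw [lt_div_iff₀ hc]; linarith), zero_div]

end family

set_option maxHeartbeats 1000000 in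
theorem second_moment_growth (d : ℕ) (hd : 0 < d)
    (α Ψ σ2 Dα : ℝ) (hα : 0 < α) (hα1 : α < 1) (hΨ : 0 < Ψ) (hσ2 : 0 < σ2)
    (hD : Dα = σ2 / (2 * d * Ψ * Real.Gamma (1 - α)))
    (ρ0 : Measure (EuclideanSpace ℝ (Fin d))) [IsFiniteMeasure ρ0]
    (ρ : ℝ → Measure (EuclideanSpace ℝ (Fin d)))
    (hfin : ∀ t, IsFiniteMeasure (ρ t))
    (hinit : ρ 0 = ρ0)
    (hcont : ∀ φ : EuclideanSpace ℝ (Fin d) → ℝ, Continuous φ → HasCompactSupport φ →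
      ContinuousOn (fun t => ∫ x, φ x ∂(ρ t)) (Ici 0))
    (hmild : ∀ φ : EuclideanSpace ℝ (Fin d) → ℝ, ContDiff ℝ 2 φ → HasCompactSupport φ →
      ∀ t : ℝ, 0 ≤ t →
        (∫ x, φ x ∂(ρ t)) = (∫ x, φ x ∂ρ0) +
          (Dα / Real.Gamma α) *
            ∫ s in (0:ℝ)..t, (t - s) ^ (α - 1) * ∫ x, laplacian d φ x ∂(ρ s))
    (hmom2 : ∀ t, 0 ≤ t → Integrable (fun x => ‖x‖ ^ 2) (ρ t))
    (hmom2loc : ∀ T : ℝ, 0 < T → ∃ C : ℝ, ∀ t ∈ Icc (0:ℝ) T,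
      (∫ x, ‖x‖ ^ 2 ∂(ρ t)) ≤ C) :
    ∀ t : ℝ, 0 ≤ t →
      (∫ x, ‖x‖ ^ 2 ∂(ρ t)) = (∫ x, ‖x‖ ^ 2 ∂ρ0) +
        (Real.sin (π * α) / (π * α)) * (σ2 / Ψ) * (ρ0 univ).toReal * t ^ α := by
  intro t ht
  classical
  obtain ⟨CG, hCG0, hCG⟩ := exists_bound_of_cutoff (G_cont (d := d)) (fun u hu => G_gt hu)
  obtain ⟨CH, hCH0, hCH⟩ := exists_bound_of_cutoff (H_cont (d := d)) (fun u hu => H_gt hu)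
  set m0 : ℝ := (ρ0 univ).toReal with hm0def
  set cc : ℕ → ℝ := fun n => (n:ℝ) + 1 with hccdef
  have hccpos : ∀ n, 0 < cc n := fun n => by positivity
  have hcc_ev : ∀ r : ℝ, ∀ᶠ n in atTop, r ≤ cc n := by
    intro r
    filter_upwards [eventually_ge_atTop ⌈r⌉₊] with n hn
    have h1 : (⌈r⌉₊ : ℝ) ≤ (n : ℝ) := by exact_mod_cast hn
    have h2 := Nat.le_ceil r
    show r ≤ (n:ℝ) + 1
    linarith
  have hdiv : ∀ K : ℝ, Tendsto (fun n : ℕ => K / cc n) atTop (𝓝 0) := by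
    intro K
    apply Tendsto.div_atTop tendsto_const_nhds
    exact tendsto_atTop_add_const_right atTop 1 tendsto_natCast_atTop_atTop
  -- mass bound on compact time intervals
  have massbd : ∀ T : ℝ, 0 ≤ T → ∃ M : ℝ, 0 ≤ M ∧
      ∀ s ∈ Icc (0:ℝ) T, ((ρ s) univ).toReal ≤ M := by
    intro T hT
    obtain ⟨C, hC⟩ := hmom2loc (T + 1) (by linarith)
    have hχcont : ContinuousOn (fun s => ∫ x, th (‖x‖^2 / 1) ∂(ρ s)) (Ici 0) :=
      hcont _ chi_cont (chi_hcs one_pos)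
    obtain ⟨B, hB⟩ := (isCompact_Icc (a := (0:ℝ)) (b := T)).exists_bound_of_continuousOn
      (hχcont.mono Icc_subset_Ici_self)
    have hB0 : 0 ≤ B := le_trans (norm_nonneg _) (hB 0 ⟨le_refl 0, hT⟩)
    have hC0 : 0 ≤ C := by
      have h1 := hC 0 ⟨le_refl 0, by linarith⟩
      have h2 : 0 ≤ ∫ x, ‖x‖^2 ∂(ρ 0) := integral_nonneg (fun x => by positivity)
      linarith
    refine ⟨B + C, by linarith, fun s hs => ?_⟩
    haveI := hfin s
    have h1 : ((ρ s) univ).toReal = ∫ x, (1:ℝ) ∂(ρ s) := by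
      simp [MeasureTheory.integral_const, Measure.real]
    have hintχ : Integrable (fun x : EuclideanSpace ℝ (Fin d) => th (‖x‖^2 / 1)) (ρ s) :=
      chi_cont.integrable_of_hasCompactSupport (chi_hcs one_pos)
    have hint2 : Integrable (fun x : EuclideanSpace ℝ (Fin d) => ‖x‖^2) (ρ s) := hmom2 s hs.1
    have hle : ∀ x : EuclideanSpace ℝ (Fin d), (1:ℝ) ≤ th (‖x‖^2 / 1) + ‖x‖^2 := by
      intro x
      rcases le_or_gt (‖x‖^2) 1 with h | h
      · have := chi_eq (d := d) one_pos (y := x) (by simpa using h)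
        have h2 : (0:ℝ) ≤ ‖x‖^2 := by positivity
        linarith
      · have := th_nonneg (‖x‖^2 / 1)
        linarith
    calc ((ρ s) univ).toReal = ∫ x, (1:ℝ) ∂(ρ s) := h1
    _ ≤ ∫ x, (th (‖x‖^2 / 1) + ‖x‖^2) ∂(ρ s) :=
        integral_mono (integrable_const 1) (hintχ.add hint2) hle
    _ = (∫ x, th (‖x‖^2 / 1) ∂(ρ s)) + ∫ x, ‖x‖^2 ∂(ρ s) := integral_add hintχ hint2
    _ ≤ B + C := by
        have hb := hB s hs
        have hc' := hC s ⟨hs.1, by linarith [hs.2]⟩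
        have : (∫ x, th (‖x‖^2 / 1) ∂(ρ s)) ≤ B :=
          le_trans (le_abs_self _) (by simpa [Real.norm_eq_abs] using hb)
        linarith
  -- mass conservation
  have masseq : ∀ s : ℝ, 0 ≤ s → ((ρ s) univ).toReal = m0 := by
    intro s hs
    haveI := hfin s
    obtain ⟨M, hM0, hM⟩ := massbd s hs
    have hA : ∀ (μ : Measure (EuclideanSpace ℝ (Fin d))), IsFiniteMeasure μ →
        Tendsto (fun n : ℕ => ∫ x, th (‖x‖^2 / cc n) ∂μ) atTop (𝓝 ((μ univ).toReal)) := by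
      intro μ hμ
      haveI := hμ
      have h := tendsto_integral_filter_of_dominated_convergence (μ := μ) (l := atTop)
        (F := fun (n:ℕ) (x : EuclideanSpace ℝ (Fin d)) => th (‖x‖^2 / cc n))
        (f := fun _ => (1:ℝ)) (fun _ => (1:ℝ))
        (Eventually.of_forall (fun n => chi_cont.aestronglyMeasurable))
        (Eventually.of_forall (fun n => ae_of_all _ (fun x => by
          rw [Real.norm_eq_abs, abs_of_nonneg (th_nonneg _)]
          exact th_le_one _)))
        (integrable_const 1)
        (ae_of_all _ (fun x => by
          apply Tendsto.congr' _ tendsto_const_nhds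
          filter_upwards [hcc_ev (‖x‖^2)] with n hn
          exact (chi_eq (hccpos n) hn).symm))
      simpa [MeasureTheory.integral_const, Measure.real] using h
    -- the remainder term tends to zero
    have hkey : ∀ n : ℕ, ‖∫ r in (0:ℝ)..s, (s - r)^(α-1) *
        ∫ x, laplacian d (fun y => th (‖y‖^2 / cc n)) x ∂(ρ r)‖
        ≤ (CH * M / cc n) * (s^α / α) := by
      intro n
      have hlap : laplacian d (fun y : EuclideanSpace ℝ (Fin d) => th (‖y‖^2 / cc n))
          = fun x => H d (‖x‖^2 / cc n) / cc n := funext (lap_chi (hccpos n))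
      have hinner : ∀ r, r ∈ Set.Ioc 0 s →
          ‖∫ x, laplacian d (fun y : EuclideanSpace ℝ (Fin d) => th (‖y‖^2 / cc n)) x ∂(ρ r)‖
          ≤ (CH / cc n) * M := by
        intro r hr
        haveI := hfin r
        have hb : ∀ x : EuclideanSpace ℝ (Fin d),
            ‖laplacian d (fun y : EuclideanSpace ℝ (Fin d) => th (‖y‖^2 / cc n)) x‖
            ≤ CH / cc n := by
          intro x
          rw [hlap, Real.norm_eq_abs, abs_div, abs_of_pos (hccpos n)]
          exact (div_le_div_iff_of_pos_right (hccpos n)).mpr (hCH _ (by positivity))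
        have := norm_integral_le_of_norm_le_const (μ := ρ r) (ae_of_all _ hb)
        apply le_trans this
        apply mul_le_mul_of_nonneg_left (hM r ⟨hr.1.le, hr.2⟩)
        positivity
      have hboundint : IntervalIntegrable (fun r => (s - r)^(α-1) * ((CH / cc n) * M))
          MeasureTheory.volume 0 s := (intervalIntegrable_weight hα).mul_const _
      have h2 := intervalIntegral.norm_integral_le_of_norm_le (μ := MeasureTheory.volume)
        (a := 0) (b := s)
        (f := fun r => (s - r)^(α-1) *
          ∫ x, laplacian d (fun y : EuclideanSpace ℝ (Fin d) => th (‖y‖^2 / cc n)) x ∂(ρ r))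
        (g := fun r => (s - r)^(α-1) * ((CH / cc n) * M))
        hs (by
          apply ae_of_all
          intro r hr
          rw [norm_mul]
          have h3 : ‖(s - r)^(α-1)‖ = (s - r)^(α-1) := by
            rw [Real.norm_eq_abs, abs_of_nonneg (Real.rpow_nonneg (by linarith [hr.2]) _)]
          rw [h3]
          exact mul_le_mul_of_nonneg_left (hinner r hr)
            (Real.rpow_nonneg (by linarith [hr.2]) _))
        hboundint
      apply le_trans h2
      rw [intervalIntegral.integral_mul_const, integral_weight hα hs]
      ring_nf
      apply le_of_eq
      ring
    have hB0 : Tendsto (fun n : ℕ => (Dα / Real.Gamma α) * ∫ r in (0:ℝ)..s, (s - r)^(α-1) *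
        ∫ x, laplacian d (fun y => th (‖y‖^2 / cc n)) x ∂(ρ r)) atTop (𝓝 0) := by
      refine squeeze_zero_norm ?_ (hdiv (|Dα / Real.Gamma α| * CH * M * (s^α / α)))
      · intro n
        rw [norm_mul]
        calc ‖Dα / Real.Gamma α‖ * ‖∫ r in (0:ℝ)..s, (s - r)^(α-1) *
            ∫ x, laplacian d (fun y => th (‖y‖^2 / cc n)) x ∂(ρ r)‖
            ≤ |Dα / Real.Gamma α| * ((CH * M / cc n) * (s^α / α)) := by
              rw [Real.norm_eq_abs]
              exact mul_le_mul_of_nonneg_left (hkey n) (abs_nonneg _)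
        _ = |Dα / Real.Gamma α| * CH * M * (s^α / α) / cc n := by ring
    have heqn : ∀ n : ℕ, (∫ x, th (‖x‖^2 / cc n) ∂(ρ s)) - ∫ x, th (‖x‖^2 / cc n) ∂ρ0
        = (Dα / Real.Gamma α) * ∫ r in (0:ℝ)..s, (s - r)^(α-1) *
          ∫ x, laplacian d (fun y => th (‖y‖^2 / cc n)) x ∂(ρ r) := by
      intro n
      have := hmild (fun y => th (‖y‖^2 / cc n)) chi_contDiff (chi_hcs (hccpos n)) s hs
      linarith
    have hAB : Tendsto (fun n : ℕ => (∫ x, th (‖x‖^2 / cc n) ∂(ρ s))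
        - ∫ x, th (‖x‖^2 / cc n) ∂ρ0) atTop (𝓝 0) := by
      apply hB0.congr
      intro n
      exact (heqn n).symm
    have := tendsto_nhds_unique ((hA (ρ s) (hfin s)).sub (hA ρ0 inferInstance)) hAB
    have h5 : ((ρ s) univ).toReal - m0 = 0 := this
    linarith
  -- second moment identity
  haveI := hfin t
  obtain ⟨M, hM0, hM⟩ := massbd t ht
  have hT1 : ∀ (μ : Measure (EuclideanSpace ℝ (Fin d))), IsFiniteMeasure μ →
      Integrable (fun x => ‖x‖^2) μ →
      Tendsto (fun n : ℕ => ∫ x, cc n * ps (‖x‖^2 / cc n) ∂μ) atTop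
        (𝓝 (∫ x, ‖x‖^2 ∂μ)) := by
    intro μ hμ hint
    haveI := hμ
    exact tendsto_integral_filter_of_dominated_convergence (μ := μ) (l := atTop)
      (F := fun (n:ℕ) (x : EuclideanSpace ℝ (Fin d)) => cc n * ps (‖x‖^2 / cc n))
      (f := fun x => ‖x‖^2) (fun x => ‖x‖^2)
      (Eventually.of_forall (fun n => phi_cont.aestronglyMeasurable))
      (Eventually.of_forall (fun n => ae_of_all _ (fun x => by
        rw [Real.norm_eq_abs, abs_of_nonneg (phi_nonneg (hccpos n) x)]
        exact phi_le (hccpos n) x)))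
      hint
      (ae_of_all _ (fun x => by
        apply Tendsto.congr' _ tendsto_const_nhds
        filter_upwards [hcc_ev (‖x‖^2)] with n hn
        exact (phi_eq (hccpos n) hn).symm))
  have hT3 : Tendsto (fun n : ℕ => ∫ r in (0:ℝ)..t, (t - r)^(α-1) *
      ∫ x, laplacian d (fun y => cc n * ps (‖y‖^2 / cc n)) x ∂(ρ r)) atTop
      (𝓝 (∫ r in (0:ℝ)..t, (t - r)^(α-1) * (2 * d * m0))) := by
    apply intervalIntegral.tendsto_integral_filter_of_dominated_convergence
      (bound := fun r => (t - r)^(α-1) * (CG * M))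
    · -- measurability
      apply Eventually.of_forall
      intro n
      apply AEStronglyMeasurable.mul
      · exact ((measurable_const.sub measurable_id).pow_const _).aestronglyMeasurable.restrict
      · have hco : ContinuousOn (fun r => ∫ x,
            laplacian d (fun y : EuclideanSpace ℝ (Fin d) => cc n * ps (‖y‖^2 / cc n)) x ∂(ρ r))
            (Set.Ioc 0 t) :=
          (hcont _ (lap_phi_cont (hccpos n)) (lap_phi_hcs (hccpos n))).mono
            (fun r hr => hr.1.le)
        rw [Set.uIoc_of_le ht]
        exact hco.aestronglyMeasurable measurableSet_Ioc
    · -- bound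
      apply Eventually.of_forall
      intro n
      apply ae_of_all
      intro r hr
      rw [Set.uIoc_of_le ht] at hr
      have hr2 : r ≤ t := hr.2
      have hw : (0:ℝ) ≤ (t - r)^(α-1) := Real.rpow_nonneg (by linarith) _
      rw [norm_mul, Real.norm_eq_abs ((t - r)^(α-1)), abs_of_nonneg hw]
      apply mul_le_mul_of_nonneg_left _ hw
      haveI := hfin r
      have hlap : laplacian d (fun y : EuclideanSpace ℝ (Fin d) => cc n * ps (‖y‖^2 / cc n))
          = fun x => G d (‖x‖^2 / cc n) := funext (lap_phi (hccpos n))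
      have hb : ∀ x : EuclideanSpace ℝ (Fin d),
          ‖laplacian d (fun y : EuclideanSpace ℝ (Fin d) => cc n * ps (‖y‖^2 / cc n)) x‖
          ≤ CG := by
        intro x
        rw [hlap, Real.norm_eq_abs]
        exact hCG _ (by positivity)
      apply le_trans (norm_integral_le_of_norm_le_const (μ := ρ r) (ae_of_all _ hb))
      exact mul_le_mul_of_nonneg_left (hM r ⟨hr.1.le, hr2⟩) hCG0
    · exact (intervalIntegrable_weight hα).mul_const _
    · -- pointwise limit
      apply ae_of_all
      intro r hr
      rw [Set.uIoc_of_le ht] at hr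
      haveI := hfin r
      apply Tendsto.const_mul
      have hmass : ((ρ r) univ).toReal = m0 := masseq r hr.1.le
      have hlim : Tendsto (fun n : ℕ => ∫ x,
          laplacian d (fun y : EuclideanSpace ℝ (Fin d) => cc n * ps (‖y‖^2 / cc n)) x ∂(ρ r))
          atTop (𝓝 (∫ x : EuclideanSpace ℝ (Fin d), (2*(d:ℝ)) ∂(ρ r))) := by
        apply tendsto_integral_filter_of_dominated_convergence (μ := ρ r) (l := atTop)
          (bound := fun _ => CG)
        · apply Eventually.of_forall
          intro n
          exact (lap_phi_cont (hccpos n)).aestronglyMeasurable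
        · apply Eventually.of_forall
          intro n
          apply ae_of_all
          intro x
          rw [funext (lap_phi (hccpos n)), Real.norm_eq_abs]
          exact hCG _ (by positivity)
        · exact integrable_const _
        · apply ae_of_all
          intro x
          apply Tendsto.congr' _ tendsto_const_nhds
          filter_upwards [hcc_ev (‖x‖^2 + 1)] with n hn
          have hu : ‖x‖^2 / cc n < 1 := by
            rw [div_lt_one (hccpos n)]
            linarith
          rw [funext (lap_phi (hccpos n))]
          exact (G_lt hu).symm
      have : (∫ x : EuclideanSpace ℝ (Fin d), (2*(d:ℝ)) ∂(ρ r)) = 2 * d * m0 := by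
        rw [MeasureTheory.integral_const, smul_eq_mul, measureReal_def, hmass]
        ring
      rw [this] at hlim
      exact hlim
  have heqn2 : ∀ n : ℕ, (∫ x, cc n * ps (‖x‖^2 / cc n) ∂(ρ t))
      = (∫ x, cc n * ps (‖x‖^2 / cc n) ∂ρ0) + (Dα / Real.Gamma α) *
        ∫ r in (0:ℝ)..t, (t - r)^(α-1) *
          ∫ x, laplacian d (fun y => cc n * ps (‖y‖^2 / cc n)) x ∂(ρ r) :=
    fun n => hmild _ phi_contDiff (phi_hcs (hccpos n)) t ht
  have hmomρ0 : Integrable (fun x : EuclideanSpace ℝ (Fin d) => ‖x‖^2) ρ0 := by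
    rw [← hinit]; exact hmom2 0 le_rfl
  have key := tendsto_nhds_unique (hT1 (ρ t) (hfin t) (hmom2 t ht))
    (Tendsto.congr (fun n => (heqn2 n).symm)
      ((hT1 ρ0 inferInstance hmomρ0).add (hT3.const_mul (Dα / Real.Gamma α))))
  have hval : (∫ r in (0:ℝ)..t, (t - r)^(α-1) * (2 * d * m0)) = 2*d*m0*(t^α/α) := by
    rw [intervalIntegral.integral_mul_const, integral_weight hα ht]
    ring
  rw [hval] at key
  -- Gamma algebra
  have hΓα : 0 < Real.Gamma α := Real.Gamma_pos_of_pos hα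
  have hΓ1α : 0 < Real.Gamma (1 - α) := Real.Gamma_pos_of_pos (by linarith)
  have hπ := Real.pi_pos
  have hsinpos : 0 < Real.sin (π * α) :=
    Real.sin_pos_of_pos_of_lt_pi (by positivity) (by nlinarith)
  have hrefl := Real.Gamma_mul_Gamma_one_sub α
  have hsin2 : Real.sin (π * α) = π / (Real.Gamma α * Real.Gamma (1 - α)) := by
    rw [hrefl]
    field_simp
  have hdne : ((d:ℝ)) ≠ 0 := Nat.cast_ne_zero.mpr hd.ne'
  have hcoef : (Dα / Real.Gamma α) * (2*d*m0*(t^α/α))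
      = Real.sin (π * α) / (π * α) * (σ2 / Ψ) * m0 * t^α := by
    rw [hD, hsin2]
    field_simp
  rw [key, hcoef]
end
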